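/- arXiv:hep-th/9311171 — 6 statements merged into one kernel-verified Lean document; each statement's English description precedes it below -/
import Mathlib

section
/- For all i ≠ j in {0, …, l}, the derivations Q_i of π₀ satisfy the Serre relations of the affine Kac–Moody algebra with Cartan matrix A: the iterated commutator (ad Q_i)^{-a_{ij}+1}(Q_j) = [Q_i, [Q_i, …, [Q_i, Q_j] …]] (with Q_i appearing -a_{ij}+1 times) vanishes in the Lie algebra of ℂ-derivations of π₀. -/
open MvPolynomial

noncomputable section

/-- The algebra of differential polynomials in the variables `u_i^{(n)}`, `1 ≤ i ≤ l`, `n ≥ 0`. -/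
abbrev Pi0 (l : ℕ) : Type := MvPolynomial (Fin l × ℕ) ℂ

/-- The variable `u_i^{(n)}`. -/
def u {l : ℕ} (i : Fin l) (n : ℕ) : Pi0 l := X (i, n)

/-- The derivation `∂` with `∂ u_i^{(n)} = u_i^{(n+1)}`. -/
def pa (l : ℕ) : Derivation ℂ (Pi0 l) (Pi0 l) :=
  mkDerivation ℂ (fun p => X (p.1, p.2 + 1))

/-- An affine generalized Cartan matrix of size `(l+1) × (l+1)`: an indecomposable integer
matrix with `a_{ii} = 2`, `a_{ij} ≤ 0` for `i ≠ j`, `a_{ij} = 0 ↔ a_{ji} = 0`, symmetrizable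
by positive rationals `d_i`, and admitting a vector of positive integer labels `(a_0,…,a_l)`
with `∑_j a_j a_{ij} = 0` for all `i`. -/
structure AffineGCM (l : ℕ) where
  A : Matrix (Fin (l+1)) (Fin (l+1)) ℤ
  diag : ∀ i, A i i = 2
  offdiag : ∀ i j, i ≠ j → A i j ≤ 0
  zeroIff : ∀ i j, A i j = 0 ↔ A j i = 0
  d : Fin (l+1) → ℚ
  d_pos : ∀ i, 0 < d i
  dsymm : ∀ i j, d i * A i j = d j * A j i
  label : Fin (l+1) → ℕ
  label_pos : ∀ i, 0 < label i
  null : ∀ i, ∑ j, (label j : ℤ) * A i j = 0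
  indec : ∀ S : Set (Fin (l+1)), (∀ i ∈ S, ∀ j ∉ S, A i j = 0) → S = ∅ ∨ S = Set.univ

namespace AffineGCM

variable {l : ℕ} (K : AffineGCM l)

/-- The symmetrized bilinear form `(α_i, α_j) := d_i a_{ij}`. -/
def B (i j : Fin (l+1)) : ℂ := (K.d i : ℂ) * (K.A i j : ℂ)

/-- `u_j^{(n)}` for `j = 0,…,l`, where `u_0^{(n)} := -(1/a_0) ∑_{i=1}^l a_i u_i^{(n)}`.
Here `j = 0` is `Fin.cases`' zero case and `j = i.succ` corresponds to `u_i^{(n)}`. -/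
def Uv (j : Fin (l+1)) (n : ℕ) : Pi0 l :=
  Fin.cases (-(1 / (K.label 0 : ℂ)) • ∑ i : Fin l, (K.label i.succ : ℂ) • u i n)
    (fun i => u i n) j

/-- The Faà di Bruno polynomials: `B_i^{(0)} = 1`,
`B_i^{(n+1)} = -u_i^{(0)} B_i^{(n)} + ∂ B_i^{(n)}`. -/
def FdB (i : Fin (l+1)) : ℕ → Pi0 l
  | 0 => 1
  | n+1 => -(K.Uv i 0) * FdB i n + pa l (FdB i n)

/-- The unique `ℂ`-derivation `Q_i` of `π₀` with `Q_i u_j^{(n)} = -(α_i,α_j) B_i^{(n)}`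
for `1 ≤ j ≤ l`, `n ≥ 0`. -/
def Q (i : Fin (l+1)) : Derivation ℂ (Pi0 l) (Pi0 l) :=
  mkDerivation ℂ (fun p => -(K.B i p.1.succ) • K.FdB i p.2)

end AffineGCM


namespace SerrePS
section GenSection
open PowerSeries


variable {A : Type*} [CommRing A] [Algebra ℂ A]

/-- coefficientwise extension of a derivation to power series -/
def dext (D : Derivation ℂ A A) (F : A⟦X⟧) : A⟦X⟧ := PowerSeries.mk fun n => D (PowerSeries.coeff n F)

@[simp] lemma coeff_dext (D : Derivation ℂ A A) (F : A⟦X⟧) (n : ℕ) :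
    PowerSeries.coeff n (dext D F) = D (PowerSeries.coeff n F) := PowerSeries.coeff_mk _ _

@[simp] lemma dext_zero (D : Derivation ℂ A A) : dext D (0 : A⟦X⟧) = 0 := by
  ext n; simp

lemma dext_add (D : Derivation ℂ A A) (F G : A⟦X⟧) :
    dext D (F + G) = dext D F + dext D G := by
  ext n; simp

lemma dext_sub (D : Derivation ℂ A A) (F G : A⟦X⟧) :
    dext D (F - G) = dext D F - dext D G := by
  ext n; simp

lemma dext_mul (D : Derivation ℂ A A) (F G : A⟦X⟧) :
    dext D (F * G) = dext D F * G + F * dext D G := by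
  ext n
  rw [map_add (PowerSeries.coeff n), coeff_dext, PowerSeries.coeff_mul, map_sum, PowerSeries.coeff_mul, PowerSeries.coeff_mul,
    ← Finset.sum_add_distrib]
  refine Finset.sum_congr rfl fun p _ => ?_
  rw [Derivation.leibniz, smul_eq_mul, smul_eq_mul, coeff_dext, coeff_dext]
  ring

lemma dext_C (D : Derivation ℂ A A) (r : A) : dext D (PowerSeries.C r) = PowerSeries.C (D r) := by
  ext n
  rw [coeff_dext, PowerSeries.coeff_C, PowerSeries.coeff_C]
  split <;> simp

lemma dext_C_mul (D : Derivation ℂ A A) (r : A) (F : A⟦X⟧) :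
    dext D (PowerSeries.C r * F) = PowerSeries.C (D r) * F + PowerSeries.C r * dext D F := by
  ext n
  rw [coeff_dext, PowerSeries.coeff_C_mul, map_add (PowerSeries.coeff n), PowerSeries.coeff_C_mul, PowerSeries.coeff_C_mul, coeff_dext,
    Derivation.leibniz, smul_eq_mul, smul_eq_mul]
  ring

lemma dext_der (D : Derivation ℂ A A) (F : A⟦X⟧) :
    dext D (d⁄dX A F) = d⁄dX A (dext D F) := by
  ext n
  rw [coeff_dext, PowerSeries.coeff_derivative, PowerSeries.coeff_derivative, coeff_dext]
  have h : ∀ x : A, D (x * ((n:A) + 1)) = D x * ((n:A)+1) := by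
    intro x
    rw [Derivation.leibniz, smul_eq_mul, smul_eq_mul]
    have : D ((n:A)+1) = 0 := by
      rw [show ((n:A)+1) = ((n+1 : ℕ) : A) by push_cast; ring, Derivation.map_natCast]
    rw [this]; ring
  rw [h]

@[simp] lemma dext_one (D : Derivation ℂ A A) : dext D (1 : A⟦X⟧) = 0 := by
  rw [← map_one (PowerSeries.C (R := A)), dext_C, Derivation.map_one_eq_zero, map_zero]

lemma derivation_algebraMap_mul (D : Derivation ℂ A A) (c : ℂ) (x : A) :
    D (algebraMap ℂ A c * x) = algebraMap ℂ A c * D x := by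
  rw [← Algebra.smul_def, D.map_smul, Algebra.smul_def]

/-- Integration (with zero constant term). -/
def intg (F : A⟦X⟧) : A⟦X⟧ := PowerSeries.mk fun n =>
  match n with
  | 0 => 0
  | k+1 => (((k:ℂ)+1))⁻¹ • PowerSeries.coeff k F

@[simp] lemma coeff_intg_zero (F : A⟦X⟧) : PowerSeries.coeff 0 (intg F) = 0 := PowerSeries.coeff_mk _ _

@[simp] lemma constantCoeff_intg (F : A⟦X⟧) : PowerSeries.constantCoeff (intg F) = 0 := by
  rw [← PowerSeries.coeff_zero_eq_constantCoeff_apply]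
  exact coeff_intg_zero F

lemma coeff_intg_succ (F : A⟦X⟧) (k : ℕ) :
    PowerSeries.coeff (k+1) (intg F) = (((k:ℂ)+1))⁻¹ • PowerSeries.coeff k F := PowerSeries.coeff_mk _ _

lemma natsucc_smul_eq (x : A) (n : ℕ) : ((n:ℂ)+1) • x = x * ((n:A)+1) := by
  have h : ((n:ℂ)+1) = ((n+1 : ℕ) : ℂ) := by push_cast; ring
  rw [h, Nat.cast_smul_eq_nsmul, nsmul_eq_mul]
  push_cast; ring

@[simp] lemma der_intg (F : A⟦X⟧) : d⁄dX A (intg F) = F := by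
  ext n
  rw [PowerSeries.coeff_derivative, coeff_intg_succ, ← natsucc_smul_eq, smul_smul]
  rw [mul_inv_cancel₀ (Nat.cast_add_one_ne_zero n), one_smul]

lemma coeff_succ_der (F : A⟦X⟧) (n : ℕ) :
    PowerSeries.coeff (n+1) F = (((n:ℂ)+1))⁻¹ • PowerSeries.coeff n (d⁄dX A F) := by
  rw [PowerSeries.coeff_derivative, ← natsucc_smul_eq, smul_smul, inv_mul_cancel₀ (Nat.cast_add_one_ne_zero n), one_smul]

lemma eq_of_der {F G : A⟦X⟧} (h : d⁄dX A F = d⁄dX A G) (h0 : PowerSeries.coeff 0 F = PowerSeries.coeff 0 G) :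
    F = G := by
  ext n
  induction n with
  | zero => exact h0
  | succ k _ => rw [coeff_succ_der, coeff_succ_der, h]

lemma intg_unique {F G : A⟦X⟧} (h : d⁄dX A G = F) (h0 : PowerSeries.coeff 0 G = 0) : intg F = G :=
  eq_of_der (by rw [der_intg, h]) (by rw [coeff_intg_zero, h0])

@[simp] lemma intg_zero : intg (0 : A⟦X⟧) = 0 :=
  intg_unique (by simp) (by simp)

lemma intg_add (F G : A⟦X⟧) : intg (F + G) = intg F + intg G := by
  refine intg_unique ?_ ?_
  · rw [map_add]; simp
  · simp

lemma intg_sub (F G : A⟦X⟧) : intg (F - G) = intg F - intg G := by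
  refine intg_unique ?_ ?_
  · rw [map_sub]; simp
  · simp

lemma intg_der (F : A⟦X⟧) : intg (d⁄dX A F) = F - PowerSeries.C (PowerSeries.coeff 0 F) := by
  refine intg_unique ?_ ?_
  · rw [map_sub]; simp
  · simp [PowerSeries.coeff_C]

lemma dext_intg (D : Derivation ℂ A A) (F : A⟦X⟧) :
    dext D (intg F) = intg (dext D F) := by
  ext n
  match n with
  | 0 => simp
  | k+1 => rw [coeff_dext, coeff_intg_succ, coeff_intg_succ, coeff_dext, D.map_smul]

/-- scalar embedding -/
def cc : ℂ →+* A⟦X⟧ := algebraMap ℂ (A⟦X⟧)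

lemma coeff_cc_mul (c : ℂ) (F : A⟦X⟧) (n : ℕ) :
    PowerSeries.coeff n (cc c * F) = algebraMap ℂ A c * PowerSeries.coeff n F := by
  have : (cc c : A⟦X⟧) = PowerSeries.C (algebraMap ℂ A c) := PowerSeries.algebraMap_apply
  rw [this, PowerSeries.coeff_C_mul]

lemma smul_eq_cc_mul (c : ℂ) (F : A⟦X⟧) : c • F = cc c * F := Algebra.smul_def c F

lemma intg_cc_mul (c : ℂ) (F : A⟦X⟧) : intg (cc c * F) = cc c * intg F := by
  ext n
  match n with
  | 0 => simp [coeff_cc_mul]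
  | k+1 =>
    rw [coeff_intg_succ, coeff_cc_mul, coeff_cc_mul, coeff_intg_succ, ← Algebra.smul_def,
      ← Algebra.smul_def, smul_comm]

lemma dext_cc_mul (D : Derivation ℂ A A) (c : ℂ) (F : A⟦X⟧) :
    dext D (cc c * F) = cc c * dext D F := by
  ext n
  rw [coeff_dext, coeff_cc_mul, coeff_cc_mul, coeff_dext, ← Algebra.smul_def, ← Algebra.smul_def,
    D.map_smul]

lemma der_cc_mul (c : ℂ) (F : A⟦X⟧) : d⁄dX A (cc c * F) = cc c * d⁄dX A F := by
  have : (cc c : A⟦X⟧) = PowerSeries.C (algebraMap ℂ A c) := PowerSeries.algebraMap_apply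
  rw [this, Derivation.leibniz, smul_eq_mul, smul_eq_mul, PowerSeries.derivative_C, mul_zero, add_zero,
    mul_comm]

omit [Algebra ℂ A] in
lemma der_mul (F G : A⟦X⟧) : d⁄dX A (F * G) = d⁄dX A F * G + F * d⁄dX A G := by
  rw [Derivation.leibniz, smul_eq_mul, smul_eq_mul]; ring

lemma C_smul (c : ℂ) (x : A) : PowerSeries.C (c • x) = cc c * PowerSeries.C x := by
  rw [Algebra.smul_def, map_mul, cc, PowerSeries.algebraMap_apply]

end GenSection

section KSection
open PowerSeries
open AffineGCM

variable {l : ℕ}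

/-- The exponential generating function of the Faà di Bruno polynomials. -/
def Bs (K : AffineGCM l) (k : Fin (l+1)) : (Pi0 l)⟦X⟧ :=
  PowerSeries.mk fun n => ((n.factorial : ℂ))⁻¹ • K.FdB k n

lemma coeff_Bs (K : AffineGCM l) (k : Fin (l+1)) (n : ℕ) :
    PowerSeries.coeff n (Bs K k) = ((n.factorial : ℂ))⁻¹ • K.FdB k n :=
  PowerSeries.coeff_mk _ _

lemma factC_ne (n : ℕ) : ((n.factorial : ℂ)) ≠ 0 := Nat.cast_ne_zero.mpr n.factorial_ne_zero

lemma FdB_eq_coeff (K : AffineGCM l) (k : Fin (l+1)) (n : ℕ) :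
    K.FdB k n = (n.factorial : ℂ) • PowerSeries.coeff n (Bs K k) := by
  rw [coeff_Bs, smul_smul, mul_inv_cancel₀ (factC_ne n), one_smul]

@[simp] lemma coeff_Bs_zero (K : AffineGCM l) (k : Fin (l+1)) :
    PowerSeries.coeff 0 (Bs K k) = 1 := by
  rw [coeff_Bs]
  simp [AffineGCM.FdB]

lemma pa_X (p : Fin l × ℕ) : pa l (MvPolynomial.X p) = MvPolynomial.X (p.1, p.2 + 1) :=
  MvPolynomial.mkDerivation_X _ _ _

lemma FdB_succ (K : AffineGCM l) (k : Fin (l+1)) (n : ℕ) :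
    K.FdB k (n+1) = -(K.Uv k 0) * K.FdB k n + pa l (K.FdB k n) := rfl

lemma der_Bs (K : AffineGCM l) (k : Fin (l+1)) :
    d⁄dX (Pi0 l) (Bs K k) = dext (pa l) (Bs K k) - PowerSeries.C (K.Uv k 0) * Bs K k := by
  refine PowerSeries.ext fun n => ?_
  rw [PowerSeries.coeff_derivative, map_sub (PowerSeries.coeff n), coeff_dext,
    PowerSeries.coeff_C_mul, coeff_Bs, coeff_Bs, ← natsucc_smul_eq, smul_smul]
  have hf : ((n:ℂ)+1) * (((n+1).factorial : ℂ))⁻¹ = ((n.factorial : ℂ))⁻¹ := by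
    rw [Nat.factorial_succ]
    push_cast
    rw [mul_inv, ← mul_assoc, mul_inv_cancel₀ (Nat.cast_add_one_ne_zero n), one_mul]
  rw [hf, FdB_succ]
  simp only [Algebra.smul_def, derivation_algebraMap_mul, map_add, map_mul, map_neg]
  ring

/-- The two-parameter family of derivations. -/
def der2 (K : AffineGCM l) (i j : Fin (l+1)) (P Q : (Pi0 l)⟦X⟧) :
    Derivation ℂ (Pi0 l) (Pi0 l) :=
  MvPolynomial.mkDerivation ℂ fun p =>
    (-(K.B i p.1.succ) * (p.2.factorial : ℂ)) • PowerSeries.coeff p.2 P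
      + (-(K.B j p.1.succ) * (p.2.factorial : ℂ)) • PowerSeries.coeff p.2 Q

lemma der2_X (K : AffineGCM l) (i j : Fin (l+1)) (P Q : (Pi0 l)⟦X⟧) (k : Fin l) (n : ℕ) :
    der2 K i j P Q (MvPolynomial.X (k, n)) =
      (-(K.B i k.succ) * (n.factorial : ℂ)) • PowerSeries.coeff n P
      + (-(K.B j k.succ) * (n.factorial : ℂ)) • PowerSeries.coeff n Q :=
  MvPolynomial.mkDerivation_X _ _ _

lemma label_ne (K : AffineGCM l) (t : Fin (l+1)) : ((K.label t : ℂ)) ≠ 0 :=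
  Nat.cast_ne_zero.mpr (K.label_pos t).ne'

lemma nullC (K : AffineGCM l) (i : Fin (l+1)) :
    ∑ t : Fin l, (K.label t.succ : ℂ) * K.B i t.succ = -((K.label 0 : ℂ) * K.B i 0) := by
  have h2 : ∑ t : Fin (l+1), (K.label t : ℂ) * K.B i t = 0 := by
    have h3 : ∑ t : Fin (l+1), (K.label t : ℂ) * K.B i t
        = (K.d i : ℂ) * (((∑ t, (K.label t : ℤ) * K.A i t : ℤ)) : ℂ) := by
      push_cast
      rw [Finset.mul_sum]
      refine Finset.sum_congr rfl fun t _ => ?_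
      rw [AffineGCM.B]
      push_cast
      ring
    rw [h3, K.null i]
    simp
  rw [Fin.sum_univ_succ] at h2
  linear_combination h2

lemma Uv_succ (K : AffineGCM l) (t : Fin l) (n : ℕ) :
    K.Uv t.succ n = MvPolynomial.X (t, n) := by
  simp [AffineGCM.Uv, u]

lemma Uv_zero (K : AffineGCM l) (n : ℕ) :
    K.Uv 0 n = -(1 / (K.label 0 : ℂ)) •
      ∑ t : Fin l, (K.label t.succ : ℂ) • MvPolynomial.X (t, n) := by
  simp [AffineGCM.Uv, u]

lemma der2_Uv (K : AffineGCM l) (i j : Fin (l+1)) (P Q : (Pi0 l)⟦X⟧) (k' : Fin (l+1)) (n : ℕ) :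
    der2 K i j P Q (K.Uv k' n) =
      (-(K.B i k') * (n.factorial : ℂ)) • PowerSeries.coeff n P
      + (-(K.B j k') * (n.factorial : ℂ)) • PowerSeries.coeff n Q := by
  induction k' using Fin.cases with
  | succ t =>
    rw [Uv_succ]
    exact der2_X K i j P Q t n
  | zero =>
    rw [Uv_zero, Derivation.map_smul, map_sum]
    have hval : ∀ t : Fin l, der2 K i j P Q ((K.label t.succ : ℂ) • MvPolynomial.X (t, n))
        = ((K.label t.succ : ℂ) * (-(K.B i t.succ) * (n.factorial : ℂ))) • PowerSeries.coeff n P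
          + ((K.label t.succ : ℂ) * (-(K.B j t.succ) * (n.factorial : ℂ)))
            • PowerSeries.coeff n Q := by
      intro t
      rw [Derivation.map_smul, der2_X, smul_add, smul_smul, smul_smul]
    rw [Finset.sum_congr rfl fun t _ => hval t, Finset.sum_add_distrib, ← Finset.sum_smul,
      ← Finset.sum_smul, smul_add, smul_smul, smul_smul]
    have e1 : ∀ (w : Fin (l+1) → ℂ),
        (∑ t : Fin l, (K.label t.succ : ℂ) * w t.succ = -((K.label 0 : ℂ) * w 0)) →
        -(1 / (K.label 0 : ℂ)) *
          (∑ t : Fin l, (K.label t.succ : ℂ) * (-(w t.succ) * (n.factorial : ℂ)))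
        = -(w 0) * (n.factorial : ℂ) := by
      intro w hw
      have : (∑ t : Fin l, (K.label t.succ : ℂ) * (-(w t.succ) * (n.factorial : ℂ)))
          = -(n.factorial : ℂ) * ∑ t : Fin l, (K.label t.succ : ℂ) * w t.succ := by
        rw [Finset.mul_sum]
        exact Finset.sum_congr rfl fun t _ => by ring
      rw [this, hw]
      field_simp [label_ne K 0]
    rw [e1 (fun t => K.B i t) (nullC K i), e1 (fun t => K.B j t) (nullC K j)]

lemma der2_pa (K : AffineGCM l) (i j : Fin (l+1)) (P Q : (Pi0 l)⟦X⟧) (x : Pi0 l) :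
    der2 K i j P Q (pa l x) = pa l (der2 K i j P Q x)
      + der2 K i j (d⁄dX (Pi0 l) P - dext (pa l) P) (d⁄dX (Pi0 l) Q - dext (pa l) Q) x := by
  have h : ⁅der2 K i j P Q, pa l⁆
      = der2 K i j (d⁄dX (Pi0 l) P - dext (pa l) P) (d⁄dX (Pi0 l) Q - dext (pa l) Q) := by
    apply MvPolynomial.derivation_ext
    rintro ⟨k, n⟩
    rw [Derivation.commutator_apply, pa_X, der2_X, der2_X, der2_X]
    simp only [map_sub (PowerSeries.coeff n), coeff_dext]
    have hfac : (((n+1).factorial : ℂ)) = ((n:ℂ)+1) * (n.factorial : ℂ) := by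
      rw [Nat.factorial_succ]; push_cast; ring
    rw [PowerSeries.coeff_derivative, PowerSeries.coeff_derivative, ← natsucc_smul_eq,
      ← natsucc_smul_eq, map_add (pa l), Derivation.map_smul, Derivation.map_smul, hfac]
    simp only [Algebra.smul_def, map_mul, map_add, map_neg, map_sub, derivation_algebraMap_mul]
    ring
  have h2 : ⁅der2 K i j P Q, pa l⁆ x
      = der2 K i j (d⁄dX (Pi0 l) P - dext (pa l) P) (d⁄dX (Pi0 l) Q - dext (pa l) Q) x := by
    rw [h]
  rw [Derivation.commutator_apply] at h2
  linear_combination h2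

/-- The discrepancy series. -/
def Wfun (K : AffineGCM l) (i j : Fin (l+1)) (P Q : (Pi0 l)⟦X⟧) (k' : Fin (l+1)) :
    (Pi0 l)⟦X⟧ :=
  dext (der2 K i j P Q) (Bs K k')
    - Bs K k' * (cc (K.B i k') * intg P + cc (K.B j k') * intg Q)

lemma odeW (K : AffineGCM l) (i j : Fin (l+1)) (P Q : (Pi0 l)⟦X⟧) (k' : Fin (l+1)) :
    d⁄dX (Pi0 l) (Wfun K i j P Q k')
      = dext (pa l) (Wfun K i j P Q k')
        - PowerSeries.C (K.Uv k' 0) * Wfun K i j P Q k'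
        + Wfun K i j (d⁄dX (Pi0 l) P - dext (pa l) P) (d⁄dX (Pi0 l) Q - dext (pa l) Q) k' := by
  have h1 : d⁄dX (Pi0 l) (dext (der2 K i j P Q) (Bs K k'))
      = dext (der2 K i j P Q) (d⁄dX (Pi0 l) (Bs K k')) := (dext_der _ _).symm
  have h3 : dext (der2 K i j P Q) (dext (pa l) (Bs K k'))
      = dext (pa l) (dext (der2 K i j P Q) (Bs K k'))
        + dext (der2 K i j (d⁄dX (Pi0 l) P - dext (pa l) P)
            (d⁄dX (Pi0 l) Q - dext (pa l) Q)) (Bs K k') := by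
    refine PowerSeries.ext fun n => ?_
    rw [map_add (PowerSeries.coeff n), coeff_dext, coeff_dext, coeff_dext, coeff_dext,
      coeff_dext, der2_pa]
  have h5 : PowerSeries.C (der2 K i j P Q (K.Uv k' 0))
      = -(cc (K.B i k') * PowerSeries.C (PowerSeries.coeff 0 P))
        - cc (K.B j k') * PowerSeries.C (PowerSeries.coeff 0 Q) := by
    rw [der2_Uv]
    norm_num
    rw [C_smul, C_smul]
    ring
  simp only [Wfun]
  rw [map_sub (d⁄dX (Pi0 l)), h1, der_Bs, dext_sub, h3, dext_C_mul, der_mul, der_Bs,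
    map_add (d⁄dX (Pi0 l)), der_cc_mul, der_cc_mul, der_intg, der_intg,
    dext_sub (pa l), dext_mul (pa l), dext_add (pa l), dext_cc_mul, dext_cc_mul,
    intg_sub, intg_sub, intg_der, intg_der, h5]
  rw [show intg (dext (pa l) P) = dext (pa l) (intg P) from (dext_intg _ _).symm,
    show intg (dext (pa l) Q) = dext (pa l) (intg Q) from (dext_intg _ _).symm]
  ring

lemma master (K : AffineGCM l) (i j : Fin (l+1)) (N : ℕ) :
    ∀ (P Q : (Pi0 l)⟦X⟧) (k' : Fin (l+1)), PowerSeries.coeff N (Wfun K i j P Q k') = 0 := by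
  induction N using Nat.strong_induction_on with
  | _ N IH =>
    intro P Q k'
    match N with
    | 0 =>
      rw [Wfun, map_sub (PowerSeries.coeff 0), coeff_dext, coeff_Bs_zero,
        Derivation.map_one_eq_zero]
      rw [PowerSeries.coeff_mul]
      simp [coeff_cc_mul]
    | N+1 =>
      rw [coeff_succ_der, odeW, map_add (PowerSeries.coeff N), map_sub (PowerSeries.coeff N),
        coeff_dext, PowerSeries.coeff_C_mul, IH N (Nat.lt_succ_self N) P Q k',
        IH N (Nat.lt_succ_self N) _ _ k']
      simp

lemma masterEq (K : AffineGCM l) (i j : Fin (l+1)) (P Q : (Pi0 l)⟦X⟧) (k' : Fin (l+1)) :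
    dext (der2 K i j P Q) (Bs K k')
      = Bs K k' * (cc (K.B i k') * intg P + cc (K.B j k') * intg Q) := by
  refine PowerSeries.ext fun n => ?_
  have := master K i j n P Q k'
  rw [Wfun, map_sub (PowerSeries.coeff n)] at this
  exact sub_eq_zero.mp this


lemma Q_eq_i (K : AffineGCM l) (i j : Fin (l+1)) : K.Q i = der2 K i j (Bs K i) 0 := by
  apply MvPolynomial.derivation_ext
  rintro ⟨k, n⟩
  rw [show K.Q i = MvPolynomial.mkDerivation ℂ
      (fun p => -(K.B i p.1.succ) • K.FdB i p.2) from rfl,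
    MvPolynomial.mkDerivation_X, der2_X, coeff_Bs]
  simp only [map_zero, smul_zero, add_zero, smul_smul]
  rw [mul_assoc, mul_inv_cancel₀ (factC_ne n), mul_one]

lemma Q_eq_j (K : AffineGCM l) (i j : Fin (l+1)) : K.Q j = der2 K i j 0 (Bs K j) := by
  apply MvPolynomial.derivation_ext
  rintro ⟨k, n⟩
  rw [show K.Q j = MvPolynomial.mkDerivation ℂ
      (fun p => -(K.B j p.1.succ) • K.FdB j p.2) from rfl,
    MvPolynomial.mkDerivation_X, der2_X, coeff_Bs]
  simp only [map_zero, smul_zero, zero_add, smul_smul]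
  rw [mul_assoc, mul_inv_cancel₀ (factC_ne n), mul_one]

lemma bracket_der2 (K : AffineGCM l) (i j : Fin (l+1)) (P Q : (Pi0 l)⟦X⟧) :
    ⁅K.Q i, der2 K i j P Q⁆
      = der2 K i j
          (dext (K.Q i) P - Bs K i * (cc (K.B i i) * intg P + cc (K.B j i) * intg Q))
          (dext (K.Q i) Q) := by
  apply MvPolynomial.derivation_ext
  rintro ⟨k, n⟩
  rw [Derivation.commutator_apply, der2_X, der2_X]
  have hQ : K.Q i (MvPolynomial.X (k, n)) = -(K.B i k.succ) • K.FdB i n :=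
    MvPolynomial.mkDerivation_X _ _ _
  rw [hQ, Derivation.map_smul, FdB_eq_coeff K i n, Derivation.map_smul,
    show der2 K i j P Q (PowerSeries.coeff n (Bs K i))
      = PowerSeries.coeff n (dext (der2 K i j P Q) (Bs K i)) from (coeff_dext _ _ _).symm,
    masterEq, map_add (K.Q i), Derivation.map_smul, Derivation.map_smul,
    show K.Q i (PowerSeries.coeff n P)
      = PowerSeries.coeff n (dext (K.Q i) P) from (coeff_dext _ _ _).symm,
    show K.Q i (PowerSeries.coeff n Q)
      = PowerSeries.coeff n (dext (K.Q i) Q) from (coeff_dext _ _ _).symm]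
  simp only [map_sub (PowerSeries.coeff n), Algebra.smul_def, map_mul, map_neg]
  ring

/-- `I = ∫ B_i`. -/
def Iser (K : AffineGCM l) (i : Fin (l+1)) : (Pi0 l)⟦X⟧ := intg (Bs K i)

/-- `M_m = ∫ B_j I^m`. -/
def Mser (K : AffineGCM l) (i j : Fin (l+1)) (m : ℕ) : (Pi0 l)⟦X⟧ :=
  intg (Bs K j * (Iser K i)^m)

lemma qiext_Bs (K : AffineGCM l) (i j k' : Fin (l+1)) :
    dext (K.Q i) (Bs K k') = Bs K k' * (cc (K.B i k') * Iser K i) := by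
  rw [Q_eq_i K i j, masterEq, Iser]
  simp

lemma intg_Bs_I (K : AffineGCM l) (i : Fin (l+1)) :
    intg (Bs K i * Iser K i) = cc (2⁻¹ : ℂ) * (Iser K i * Iser K i) := by
  have h2 : (cc (2⁻¹:ℂ) : (Pi0 l)⟦X⟧) * (2 : (Pi0 l)⟦X⟧) = 1 := by
    rw [show (2 : (Pi0 l)⟦X⟧) = cc (2:ℂ) from (map_ofNat cc 2).symm, ← map_mul]
    rw [inv_mul_cancel₀ (two_ne_zero)]
    exact map_one cc
  refine intg_unique ?_ ?_
  · rw [der_cc_mul, der_mul, show d⁄dX (Pi0 l) (Iser K i) = Bs K i from der_intg _]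
    linear_combination (Bs K i * Iser K i) * h2
  · rw [PowerSeries.coeff_zero_eq_constantCoeff_apply, map_mul, map_mul, Iser,
      constantCoeff_intg]
    ring

lemma qiext_I (K : AffineGCM l) (i j : Fin (l+1)) :
    dext (K.Q i) (Iser K i) = cc ((2⁻¹ : ℂ) * K.B i i) * (Iser K i * Iser K i) := by
  have h : dext (K.Q i) (Iser K i) = intg (dext (K.Q i) (Bs K i)) := by
    rw [Iser, dext_intg]
  rw [h, qiext_Bs K i j i,
    show Bs K i * (cc (K.B i i) * Iser K i) = cc (K.B i i) * (Bs K i * Iser K i) from by ring,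
    intg_cc_mul, intg_Bs_I, ← mul_assoc, ← map_mul, mul_comm (K.B i i) (2⁻¹:ℂ)]

lemma qiext_Ipow (K : AffineGCM l) (i j : Fin (l+1)) (m : ℕ) :
    dext (K.Q i) ((Iser K i)^m)
      = cc ((m : ℂ) * ((2⁻¹:ℂ) * K.B i i)) * (Iser K i)^(m+1) := by
  induction m with
  | zero => simp [dext_one]
  | succ m ih =>
    rw [pow_succ, dext_mul, ih, qiext_I K i j,
      show ((m+1 : ℕ) : ℂ) * ((2⁻¹:ℂ) * K.B i i)
        = (m : ℂ) * ((2⁻¹:ℂ) * K.B i i) + (2⁻¹:ℂ) * K.B i i from by push_cast; ring,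
      map_add]
    ring

lemma qiext_BjIm (K : AffineGCM l) (i j : Fin (l+1)) (m : ℕ) :
    dext (K.Q i) (Bs K j * (Iser K i)^m)
      = cc (K.B i j + (m:ℂ) * ((2⁻¹:ℂ) * K.B i i)) * (Bs K j * (Iser K i)^(m+1)) := by
  rw [dext_mul, qiext_Bs K i j j, qiext_Ipow K i j m, map_add]
  ring

lemma qiext_M (K : AffineGCM l) (i j : Fin (l+1)) (m : ℕ) :
    dext (K.Q i) (Mser K i j m)
      = cc (K.B i j + (m:ℂ) * ((2⁻¹:ℂ) * K.B i i)) * Mser K i j (m+1) := by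
  rw [Mser, dext_intg, qiext_BjIm K i j m, intg_cc_mul, Mser]

lemma intg_BiM (K : AffineGCM l) (i j : Fin (l+1)) (m : ℕ) :
    intg (Bs K i * Mser K i j m) = Iser K i * Mser K i j m - Mser K i j (m+1) := by
  refine intg_unique ?_ ?_
  · rw [map_sub (d⁄dX (Pi0 l)), der_mul, show d⁄dX (Pi0 l) (Iser K i) = Bs K i from der_intg _,
      show d⁄dX (Pi0 l) (Mser K i j m) = Bs K j * (Iser K i)^m from der_intg _,
      show d⁄dX (Pi0 l) (Mser K i j (m+1)) = Bs K j * (Iser K i)^(m+1) from der_intg _]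
    ring
  · simp [Iser, Mser, PowerSeries.coeff_zero_eq_constantCoeff_apply, map_sub, map_mul]

lemma qiext_BiM (K : AffineGCM l) (i j : Fin (l+1)) (m : ℕ) :
    dext (K.Q i) (Bs K i * Mser K i j m)
      = cc (K.B i i) * (Bs K i * (Iser K i * Mser K i j m))
        + cc (K.B i j + (m:ℂ) * ((2⁻¹:ℂ) * K.B i i)) * (Bs K i * Mser K i j (m+1)) := by
  rw [dext_mul, qiext_Bs K i j i, qiext_M K i j m]
  ring

lemma Bsymm (K : AffineGCM l) (i j : Fin (l+1)) : K.B j i = K.B i j := by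
  have h := K.dsymm i j
  rw [AffineGCM.B, AffineGCM.B]
  exact_mod_cast congrArg (fun q : ℚ => (q : ℂ)) h.symm

/-- The scalar sequence. -/
def lam (K : AffineGCM l) (i j : Fin (l+1)) : ℕ → ℂ
  | 0 => 1
  | m+1 => (K.B i j + (m:ℂ) * ((2⁻¹:ℂ) * K.B i i)) * lam K i j m

/-- The `i`-slot series. -/
def Pser (K : AffineGCM l) (i j : Fin (l+1)) : ℕ → (Pi0 l)⟦X⟧
  | 0 => 0
  | m+1 => cc (-((m:ℂ)+1) * lam K i j (m+1)) * (Bs K i * Mser K i j m)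

/-- The `j`-slot series. -/
def Qser (K : AffineGCM l) (i j : Fin (l+1)) (m : ℕ) : (Pi0 l)⟦X⟧ :=
  cc (lam K i j m) * (Bs K j * (Iser K i)^m)

lemma iter_eq (K : AffineGCM l) (i j : Fin (l+1)) (m : ℕ) :
    (fun D => ⁅K.Q i, D⁆)^[m] (K.Q j) = der2 K i j (Pser K i j m) (Qser K i j m) := by
  induction m with
  | zero =>
    rw [Function.iterate_zero_apply, Q_eq_j K i j,
      show Qser K i j 0 = Bs K j from by simp [Qser, lam],
      show Pser K i j 0 = 0 from rfl]
  | succ m ih =>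
    rw [Function.iterate_succ_apply', ih, bracket_der2]
    have hQslot : dext (K.Q i) (Qser K i j m) = Qser K i j (m+1) := by
      rw [Qser, dext_cc_mul, qiext_BjIm K i j m, Qser, ← mul_assoc, ← map_mul,
        show lam K i j (m+1) = (K.B i j + (m:ℂ) * ((2⁻¹:ℂ) * K.B i i)) * lam K i j m from rfl,
        mul_comm (lam K i j m)]
    rw [hQslot]
    congr 1
    cases m with
    | zero =>
      rw [show Pser K i j 0 = 0 from rfl, dext_zero, intg_zero,
        show Qser K i j 0 = Bs K j from by simp [Qser, lam],
        show Pser K i j 1 = cc (-(((0:ℕ):ℂ)+1) * lam K i j 1) * (Bs K i * Mser K i j 0) from rfl,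
        show lam K i j 1 = (K.B i j + ((0:ℕ):ℂ) * ((2⁻¹:ℂ) * K.B i i)) * lam K i j 0 from rfl,
        show lam K i j 0 = 1 from rfl,
        show Mser K i j 0 = intg (Bs K j * (Iser K i)^0) from rfl,
        Bsymm K i j]
      simp only [Nat.cast_zero, map_zero, zero_mul, mul_zero, neg_zero, add_zero, zero_add,
        map_neg, map_one, map_add, map_mul, pow_zero, mul_one, one_mul]
      ring
    | succ m =>
      have hc : -((((m+1):ℕ):ℂ)+1) = -((m:ℂ)+2) := by push_cast; ring
      have hP2 : Pser K i j (m+2)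
          = cc (-((m:ℂ)+2) * lam K i j (m+2)) * (Bs K i * Mser K i j (m+1)) := by
        rw [show Pser K i j (m+2)
            = cc (-((((m+1):ℕ):ℂ)+1) * lam K i j (m+2)) * (Bs K i * Mser K i j (m+1)) from rfl,
          hc]
      have hl : lam K i j (m+2)
          = (K.B i j + ((m:ℂ)+1) * ((2⁻¹:ℂ) * K.B i i)) * lam K i j (m+1) := by
        rw [show lam K i j (m+2)
            = (K.B i j + (((m+1):ℕ):ℂ) * ((2⁻¹:ℂ) * K.B i i)) * lam K i j (m+1) from rfl]
        push_cast
        ring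
      rw [show Pser K i j (m+1)
          = cc (-((m:ℂ)+1) * lam K i j (m+1)) * (Bs K i * Mser K i j m) from rfl,
        Qser, dext_cc_mul, qiext_BiM K i j m, intg_cc_mul, intg_cc_mul, intg_BiM K i j m,
        show intg (Bs K j * (Iser K i)^(m+1)) = Mser K i j (m+1) from rfl,
        hP2, hl, Bsymm K i j]
      set e : ℂ := (2⁻¹:ℂ) * K.B i i with he
      have h2 : cc (K.B i i) = (2 : (Pi0 l)⟦X⟧) * cc e := by
        rw [he, ← map_ofNat cc 2, ← map_mul]
        congr 1
        ring
      rw [h2]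
      simp only [map_mul, map_add, map_neg, map_one, map_ofNat]
      ring

end KSection

end SerrePS

open SerrePS in
/-- For `i ≠ j` in `{0,…,l}`, the derivations `Q_i` of `π₀` satisfy the Serre
relations of the affine Kac–Moody algebra with Cartan matrix `A`:
`(ad Q_i)^{-a_{ij}+1}(Q_j) = 0` in the Lie algebra of `ℂ`-derivations of `π₀`. -/
theorem serre_relations (l : ℕ) (hl : 1 ≤ l) (K : AffineGCM l)
    (i j : Fin (l+1)) (hij : i ≠ j) :
    (fun D => ⁅K.Q i, D⁆)^[(1 - K.A i j).toNat] (K.Q j) = 0 := by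
  have ha : K.A i j ≤ 0 := K.offdiag i j hij
  have hN : (1 - K.A i j).toNat = (-K.A i j).toNat + 1 := by omega
  rw [hN, SerrePS.iter_eq]
  have htc : (((-K.A i j).toNat : ℕ) : ℂ) = -((K.A i j : ℂ)) := by
    have h1 : (((-K.A i j).toNat : ℤ)) = -K.A i j := Int.toNat_of_nonneg (by omega)
    calc (((-K.A i j).toNat : ℕ) : ℂ) = (((((-K.A i j).toNat : ℕ)) : ℤ) : ℂ) := by
          push_cast; ring
    _ = ((-K.A i j : ℤ) : ℂ) := by rw [h1]
    _ = -((K.A i j : ℂ)) := by push_cast; ring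
  have hlam : SerrePS.lam K i j ((-K.A i j).toNat + 1) = 0 := by
    rw [show SerrePS.lam K i j ((-K.A i j).toNat + 1)
        = (K.B i j + (((-K.A i j).toNat : ℕ) : ℂ) * ((2⁻¹:ℂ) * K.B i i)) *
          SerrePS.lam K i j ((-K.A i j).toNat) from rfl]
    have hz : K.B i j + (((-K.A i j).toNat : ℕ) : ℂ) * ((2⁻¹:ℂ) * K.B i i) = 0 := by
      rw [htc, AffineGCM.B, AffineGCM.B, K.diag i]
      push_cast
      ring
    rw [hz, zero_mul]
  have hQ0 : SerrePS.Qser K i j ((-K.A i j).toNat + 1) = 0 := by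
    rw [SerrePS.Qser, hlam, map_zero, zero_mul]
  have hP0 : SerrePS.Pser K i j ((-K.A i j).toNat + 1) = 0 := by
    rw [show SerrePS.Pser K i j ((-K.A i j).toNat + 1)
        = SerrePS.cc (-(((((-K.A i j).toNat : ℕ)):ℂ)+1) * SerrePS.lam K i j ((-K.A i j).toNat + 1))
          * (SerrePS.Bs K i * SerrePS.Mser K i j ((-K.A i j).toNat)) from rfl,
      hlam, mul_zero, map_zero, zero_mul]
  rw [hP0, hQ0]
  apply MvPolynomial.derivation_ext
  rintro ⟨k, n⟩
  rw [SerrePS.der2_X]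
  simp
end
end

section
/- For every i ∈ {0, …, l}, the operators Q_i and ∂ on π₀ satisfy the commutation relation Q_i ∘ ∂ − ∂ ∘ Q_i = −u_i^{(0)} · Q_i, i.e. Q_i(∂P) − ∂(Q_i(P)) = −u_i^{(0)} Q_i(P) for all P ∈ π₀. (Equivalently, Q_i intertwines ∂ on π₀ with the twisted derivative ∂ − u_i^{(0)} on the module π_{-α_i}.) -/
open MvPolynomial

noncomputable section

/-- `Q_i(∂P) − ∂(Q_i(P)) = −u_i^{(0)} Q_i(P)` for all `P ∈ π₀`. -/
theorem Q_twisted_intertwine (l : ℕ) (hl : 1 ≤ l) (K : AffineGCM l)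
    (i : Fin (l+1)) (P : Pi0 l) :
    K.Q i (pa l P) - pa l (K.Q i P) = -(K.Uv i 0) * K.Q i P := by
  have h : ⁅K.Q i, pa l⁆ = (-(K.Uv i 0)) • K.Q i := by
    apply MvPolynomial.derivation_ext
    rintro ⟨j, n⟩
    simp only [Derivation.commutator_apply, Derivation.smul_apply]
    have hX : ∀ m : ℕ, pa l (X (j, m) : Pi0 l) = X (j, m + 1) := fun m =>
      mkDerivation_X ℂ _ _
    have hQ : ∀ m : ℕ, K.Q i (X (j, m) : Pi0 l) = -(K.B i j.succ) • K.FdB i m := fun m =>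
      mkDerivation_X ℂ _ _
    rw [hX, hQ, hQ]
    rw [show K.FdB i (n+1) = -(K.Uv i 0) * K.FdB i n + pa l (K.FdB i n) from rfl]
    rw [Derivation.map_smul]
    simp only [MvPolynomial.smul_eq_C_mul, smul_eq_mul]
    ring
  have := DFunLike.congr_fun h P
  simpa [Derivation.commutator_apply, Derivation.smul_apply, smul_eq_mul] using this
end
end

section
/- For each i ∈ {0, …, l}, the derivation Q_i is the unique ℂ-derivation D of π₀ satisfying the two conditions: (1) D ∘ ∂ − ∂ ∘ D = −u_i^{(0)} · D, and (2) D(u_j^{(0)}) = −(α_i,α_j) for all 1 ≤ j ≤ l. (This is the computational core of the identification of the left action of the generators e_i of 𝔫₊ on ℂ[N₊/A₊] with the operators Q_i.) -/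
open MvPolynomial

noncomputable section

/-- `Q_i` is the unique `ℂ`-derivation `D` of `π₀` with
(1) `D∘∂ − ∂∘D = −u_i^{(0)} · D` and (2) `D(u_j^{(0)}) = −(α_i,α_j)` for `1 ≤ j ≤ l`. -/
theorem Q_unique (l : ℕ) (hl : 1 ≤ l) (K : AffineGCM l) (i : Fin (l+1)) :
    ((∀ P : Pi0 l, K.Q i (pa l P) - pa l (K.Q i P) = -(K.Uv i 0) * K.Q i P) ∧
      (∀ j : Fin l, K.Q i (u j 0) = C (-(K.B i j.succ)))) ∧
    (∀ D : Derivation ℂ (Pi0 l) (Pi0 l),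
      (∀ P : Pi0 l, D (pa l P) - pa l (D P) = -(K.Uv i 0) * D P) →
      (∀ j : Fin l, D (u j 0) = C (-(K.B i j.succ))) →
      D = K.Q i) := by
  have hQX : ∀ (j : Fin l) (n : ℕ),
      K.Q i (X (j, n) : Pi0 l) = -(K.B i j.succ) • K.FdB i n := by
    intro j n
    exact mkDerivation_X ℂ _ (j, n)
  have hpaX : ∀ (j : Fin l) (n : ℕ),
      pa l (X (j, n) : Pi0 l) = X (j, n + 1) := by
    intro j n
    exact mkDerivation_X ℂ _ (j, n)
  have hFdB : ∀ n, K.FdB i (n + 1) = -(K.Uv i 0) * K.FdB i n + pa l (K.FdB i n) := by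
    intro n; rfl
  have hcomm : ∀ P : Pi0 l,
      K.Q i (pa l P) - pa l (K.Q i P) = -(K.Uv i 0) * K.Q i P := by
    have h : ⁅K.Q i, pa l⁆ = (-(K.Uv i 0)) • K.Q i := by
      apply derivation_ext
      rintro ⟨j, n⟩
      rw [Derivation.commutator_apply, Derivation.smul_apply, hpaX, hQX, hQX,
        Derivation.map_smul, hFdB, smul_eq_mul]
      simp only [smul_eq_C_mul]
      ring
    intro P
    have := congrArg (fun D : Derivation ℂ (Pi0 l) (Pi0 l) => D P) h
    simpa [Derivation.commutator_apply, Derivation.smul_apply, smul_eq_mul] using this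
  refine ⟨⟨hcomm, ?_⟩, ?_⟩
  · intro j
    have := hQX j 0
    simpa [AffineGCM.FdB, smul_eq_C_mul, u] using this
  · intro D h1 h2
    apply derivation_ext
    rintro ⟨j, n⟩
    have key : ∀ n : ℕ, D (X (j, n) : Pi0 l) = -(K.B i j.succ) • K.FdB i n := by
      intro n
      induction n with
      | zero =>
        have := h2 j
        simpa [AffineGCM.FdB, smul_eq_C_mul, u] using this
      | succ n ih =>
        have hD : D (pa l (X (j, n) : Pi0 l)) =
            pa l (D (X (j, n))) + -(K.Uv i 0) * D (X (j, n)) := by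
          have := h1 (X (j, n))
          linear_combination this
        rw [hpaX] at hD
        rw [hD, ih, Derivation.map_smul, hFdB]
        simp only [smul_eq_C_mul]
        ring
    rw [key n, hQX]
end
end

section
/- Suppose H ∈ π₀ is a density of a Toda integral, i.e. for every j ∈ {0, …, l} there exists S_j ∈ π₀ with Q_j(H) = ∂(S_j) − u_j^{(0)} S_j. Then for every j ∈ {0, …, l} the commutator of Q_j with the hamiltonian vector field ξ_H is proportional to Q_j: Q_j ∘ ξ_H − ξ_H ∘ Q_j = −(δ_j H) · Q_j, i.e. Q_j(ξ_H(P)) − ξ_H(Q_j(P)) = −(δ_j H)·Q_j(P) for all P ∈ π₀. -/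
open MvPolynomial

noncomputable section

namespace AffineGCM

variable {l : ℕ} (K : AffineGCM l)

/-- The variational derivative `δ_i P := ∑_{j=1}^l (α_i,α_j) ∑_{n ≥ 0} (-∂)^n (∂P/∂u_j^{(n)})`. -/
def varder (i : Fin (l+1)) (P : Pi0 l) : Pi0 l :=
  ∑ j : Fin l, K.B i j.succ •
    ∑ᶠ n : ℕ, ((-(pa l).toLinearMap) ^ n) (pderiv (j, n) P)

/-- The hamiltonian vector field `ξ_P`: the unique `ℂ`-derivation of `π₀` with
`ξ_P u_i^{(n)} = ∂^{n+1}(δ_i P)`. -/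
def xi (P : Pi0 l) : Derivation ℂ (Pi0 l) (Pi0 l) :=
  mkDerivation ℂ (fun p => ((pa l).toLinearMap ^ (p.2 + 1)) (K.varder p.1.succ P))

end AffineGCM


section TodaAux

open AffineGCM

variable {l : ℕ} (K : AffineGCM l) (j : Fin (l+1))

/-- The twisted operator `T = ∂ - v·` with `v = u_j^{(0)}`. -/
def Tj : Pi0 l →ₗ[ℂ] Pi0 l := (pa l).toLinearMap - LinearMap.mulLeft ℂ (K.Uv j 0)

lemma Tj_apply (x : Pi0 l) : Tj K j x = pa l x - K.Uv j 0 * x := rfl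

lemma pa_X (p : Fin l × ℕ) : pa l (X p) = X (p.1, p.2 + 1) :=
  mkDerivation_X _ _ _

lemma Q_X (p : Fin l × ℕ) : K.Q j (X p) = -(K.B j p.1.succ) • K.FdB j p.2 :=
  mkDerivation_X _ _ _

lemma xi_X (H : Pi0 l) (p : Fin l × ℕ) :
    K.xi H (X p) = ((pa l).toLinearMap ^ (p.2 + 1)) (K.varder p.1.succ H) :=
  mkDerivation_X _ _ _

lemma pa_mul (a b : Pi0 l) : pa l (a * b) = pa l a * b + a * pa l b := by
  rw [Derivation.leibniz]; simp only [smul_eq_mul]; ring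

lemma Tj_mul (a b : Pi0 l) : Tj K j (a * b) = Tj K j a * b + a * pa l b := by
  simp only [Tj_apply, pa_mul]; ring

lemma FdB_succ (n : ℕ) : K.FdB j (n+1) = Tj K j (K.FdB j n) := by
  simp only [AffineGCM.FdB, Tj_apply]; ring

/-- coefficients of `u_j^{(0)}` in the variables. -/
def cc (m : Fin l) : ℂ :=
  Fin.cases (-(1 / (K.label 0 : ℂ)) * (K.label m.succ : ℂ)) (fun i => if m = i then 1 else 0) j

lemma Uv_eq (n : ℕ) : K.Uv j n = ∑ m : Fin l, cc K j m • X (m, n) := by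
  induction j using Fin.cases with
  | zero =>
      simp only [AffineGCM.Uv, cc, Fin.cases_zero, u, Finset.smul_sum, smul_smul]
  | succ i =>
      simp only [AffineGCM.Uv, cc, Fin.cases_succ, u]
      rw [Finset.sum_eq_single i]
      · simp
      · intro b _ hb; simp [hb]
      · intro h; simp at h

lemma B_symm (a b : Fin (l+1)) : K.B a b = K.B b a := by
  have h := K.dsymm a b
  have h2 : ((K.d a * K.A a b : ℚ) : ℂ) = ((K.d b * K.A b a : ℚ) : ℂ) := by rw [h]
  push_cast at h2
  simp only [AffineGCM.B]
  exact h2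

lemma nullC (p : Fin (l+1)) : ∑ i : Fin (l+1), (K.label i : ℂ) * K.B i p = 0 := by
  have h := K.null p
  have : ((∑ i, (K.label i : ℤ) * K.A p i : ℤ) : ℂ) = ((0:ℤ):ℂ) := by rw [h]
  push_cast at this
  calc ∑ i : Fin (l+1), (K.label i : ℂ) * K.B i p
      = ∑ i : Fin (l+1), (K.d p : ℂ) * ((K.label i : ℂ) * (K.A p i : ℂ)) := by
        refine Finset.sum_congr rfl fun i _ => ?_
        rw [B_symm]; simp only [AffineGCM.B]; ring
    _ = (K.d p : ℂ) * ∑ i : Fin (l+1), (K.label i : ℂ) * (K.A p i : ℂ) := by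
        rw [Finset.mul_sum]
    _ = 0 := by rw [this, mul_zero]

lemma cc_B (p : Fin (l+1)) : ∑ m : Fin l, cc K j m * K.B m.succ p = K.B j p := by
  induction j using Fin.cases with
  | zero =>
      have h0 : (K.label 0 : ℂ) ≠ 0 := Nat.cast_ne_zero.mpr (K.label_pos 0).ne'
      have hnull := nullC K p
      rw [Fin.sum_univ_succ] at hnull
      simp only [cc, Fin.cases_zero]
      have : ∑ m : Fin l, -(1 / (K.label 0 : ℂ)) * (K.label m.succ : ℂ) * K.B m.succ p
          = -(1 / (K.label 0 : ℂ)) * ∑ m : Fin l, (K.label m.succ : ℂ) * K.B m.succ p := by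
        rw [Finset.mul_sum]; refine Finset.sum_congr rfl fun m _ => by ring
      rw [this]
      have hs : ∑ m : Fin l, (K.label m.succ : ℂ) * K.B m.succ p
          = -((K.label 0 : ℂ) * K.B 0 p) := by linear_combination hnull
      rw [hs]; field_simp
  | succ i =>
      simp only [cc, Fin.cases_succ]
      rw [Finset.sum_eq_single i]
      · simp
      · intro b _ hb; simp [hb]
      · intro h; simp at h

end TodaAux

section TodaAux2

open AffineGCM

variable {l : ℕ} (K : AffineGCM l) (j : Fin (l+1))

lemma pderiv_X' (i q : Fin l × ℕ) :
    pderiv i (X q : Pi0 l) = if i = q then 1 else 0 := by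
  split
  · next h => subst h; exact pderiv_X_self i
  · next h => exact pderiv_X_of_ne (Ne.symm h)

lemma Q_pa (P : Pi0 l) : K.Q j (pa l P) = Tj K j (K.Q j P) := by
  have key : ⁅K.Q j, pa l⁆ = -(K.Uv j 0) • K.Q j := by
    apply derivation_ext
    intro p
    rw [Derivation.commutator_apply, Derivation.smul_apply]
    rw [pa_X, Q_X, Q_X]
    show -K.B j p.1.succ • K.FdB j (p.2 + 1) - pa l (-K.B j p.1.succ • K.FdB j p.2) = _
    rw [Derivation.map_smul, FdB_succ, Tj_apply]
    simp only [smul_eq_mul, neg_smul, smul_smul, smul_eq_C_mul, mul_comm, mul_left_comm]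
    ring
  have h := congrArg (fun D : Derivation ℂ (Pi0 l) (Pi0 l) => D P) key
  simp only [Derivation.commutator_apply, Derivation.smul_apply, smul_eq_mul] at h
  rw [Tj_apply]
  linear_combination h

lemma xi_pa (H : Pi0 l) (P : Pi0 l) : K.xi H (pa l P) = pa l (K.xi H P) := by
  have key : ⁅K.xi H, pa l⁆ = 0 := by
    apply derivation_ext
    intro p
    rw [Derivation.commutator_apply]
    rw [pa_X, xi_X, xi_X]
    show ((pa l).toLinearMap ^ (p.2 + 1 + 1)) (K.varder p.1.succ H) - _ = _
    rw [pow_succ' (pa l).toLinearMap (p.2+1), Module.End.mul_apply]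
    simp only [Derivation.coeFn_coe, Derivation.zero_apply, sub_self]
  have h := congrArg (fun D : Derivation ℂ (Pi0 l) (Pi0 l) => D P) key
  simp only [Derivation.commutator_apply, Derivation.zero_apply] at h
  linear_combination h

lemma pd_pa_succ (m : Fin l) (n : ℕ) (P : Pi0 l) :
    pderiv (m, n+1) (pa l P) = pa l (pderiv (m, n+1) P) + pderiv (m, n) P := by
  have key : ⁅(pderiv (m, n+1) : Derivation ℂ (Pi0 l) (Pi0 l)), pa l⁆ = pderiv (m, n) := by
    apply derivation_ext
    intro p
    rw [Derivation.commutator_apply, pa_X]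
    rw [pderiv_X', pderiv_X', pderiv_X']
    have hiff : ((m, n+1) = (p.1, p.2+1)) ↔ ((m, n) = p) := by
      constructor
      · rintro h; rw [Prod.mk.injEq] at h; exact Prod.ext h.1 (Nat.succ_injective h.2)
      · rintro rfl; rfl
    have h2 : pa l (if (m, n+1) = p then (1 : Pi0 l) else 0) = 0 := by
      split <;> simp
    rw [if_congr hiff rfl rfl, h2, sub_zero]
  have h := congrArg (fun D : Derivation ℂ (Pi0 l) (Pi0 l) => D P) key
  simp only [Derivation.commutator_apply] at h
  linear_combination h

lemma pd_pa_zero (m : Fin l) (P : Pi0 l) :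
    pderiv (m, 0) (pa l P) = pa l (pderiv (m, 0) P) := by
  have key : ⁅(pderiv (m, 0) : Derivation ℂ (Pi0 l) (Pi0 l)), pa l⁆ = 0 := by
    apply derivation_ext
    intro p
    rw [Derivation.commutator_apply, pa_X, pderiv_X', pderiv_X']
    have : ¬ ((m, 0) = (p.1, p.2+1)) := by
      intro h; rw [Prod.mk.injEq] at h; exact Nat.succ_ne_zero p.2 h.2.symm
    have h2 : pa l (if (m, 0) = p then (1 : Pi0 l) else 0) = 0 := by
      split <;> simp
    rw [if_neg this, h2, Derivation.zero_apply, zero_sub, neg_zero]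
  have h := congrArg (fun D : Derivation ℂ (Pi0 l) (Pi0 l) => D P) key
  simp only [Derivation.commutator_apply, Derivation.zero_apply] at h
  linear_combination h

lemma Q_papow (n : ℕ) (P : Pi0 l) :
    K.Q j (((pa l).toLinearMap ^ n) P) = ((Tj K j) ^ n) (K.Q j P) := by
  induction n generalizing P with
  | zero => simp
  | succ n ih =>
      rw [pow_succ (pa l).toLinearMap n, Module.End.mul_apply]
      simp only [Derivation.coeFn_coe]
      rw [ih, Q_pa, pow_succ (Tj K j) n, Module.End.mul_apply]

lemma negpa_pow (n : ℕ) (x : Pi0 l) :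
    ((-(pa l).toLinearMap) ^ n) x = ((-1 : ℂ) ^ n) • (((pa l).toLinearMap ^ n) x) := by
  induction n generalizing x with
  | zero => simp
  | succ n ih =>
      rw [pow_succ (-(pa l).toLinearMap) n, pow_succ (pa l).toLinearMap n,
        Module.End.mul_apply, Module.End.mul_apply, LinearMap.neg_apply, map_neg, ih, pow_succ]
      module

lemma deriv_sum_apply {ι : Type*} (s : Finset ι) (f : ι → Derivation ℂ (Pi0 l) (Pi0 l))
    (a : Pi0 l) : (∑ p ∈ s, f p) a = ∑ p ∈ s, f p a := by
  classical
  induction s using Finset.induction_on with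
  | empty => simp
  | insert _ _ hns ih => rename_i p s'
                         rw [Finset.sum_insert hns, Finset.sum_insert hns, Derivation.add_apply, ih]

lemma EXP (D : Derivation ℂ (Pi0 l) (Pi0 l)) (P : Pi0 l) (s : Finset (Fin l × ℕ))
    (h : (P.vars : Set (Fin l × ℕ)) ⊆ ↑s) :
    D P = ∑ p ∈ s, D (X p) * pderiv p P := by
  classical
  have hmem : P ∈ supported ℂ (↑s : Set (Fin l × ℕ)) := (mem_supported).2 h
  set E : Derivation ℂ (Pi0 l) (Pi0 l) := ∑ p ∈ s, D (X p) • (pderiv p) with hE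
  have hXE : ∀ q ∈ (↑s : Set (Fin l × ℕ)), (D ∘ X) q = (E ∘ X) q := by
    intro q hq
    have : E (X q) = ∑ p ∈ s, D (X p) • (pderiv p (X q)) := by
      rw [hE, deriv_sum_apply]
      simp only [Derivation.smul_apply]
    rw [Function.comp_apply, Function.comp_apply, this]
    rw [Finset.sum_eq_single q]
    · rw [pderiv_X', if_pos rfl]; simp [smul_eq_mul]
    · intro b _ hb; rw [pderiv_X', if_neg hb, smul_zero]
    · intro hq'; exact absurd hq hq'
  have hDP : D P = E P := derivation_eqOn_supported hXE hmem
  rw [hDP, hE, deriv_sum_apply]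
  simp only [Derivation.smul_apply, smul_eq_mul]

end TodaAux2

section TodaAux3

open AffineGCM

variable {l : ℕ} (K : AffineGCM l) (j : Fin (l+1))

/-- Fréchet-derivative coefficients of the Faà di Bruno polynomials. -/
def beta (K : AffineGCM l) (j : Fin (l+1)) : ℕ → ℕ → Pi0 l
  | _, 0 => 0
  | 0, (n'+1) => Tj K j (beta K j 0 n') + (-(K.FdB j n'))
  | (n+1), (n'+1) => Tj K j (beta K j (n+1) n') + beta K j n n'

lemma beta_vanish : ∀ n' n, n' ≤ n → beta K j n n' = 0 := by
  intro n'
  induction n' with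
  | zero => intro n _; cases n <;> rfl
  | succ n' ih =>
      intro n hn
      obtain ⟨m, rfl⟩ : ∃ m, n = m + 1 := ⟨n - 1, by omega⟩
      show Tj K j (beta K j (m+1) n') + beta K j m n' = 0
      rw [ih (m+1) (by omega), ih m (by omega), map_zero, add_zero]

lemma Tpow_succ_apply (k : ℕ) (x : Pi0 l) :
    (Tj K j ^ (k+1)) x = (Tj K j ^ k) (Tj K j x) := by
  rw [pow_succ, Module.End.mul_apply]

lemma papow_succ_apply (k : ℕ) (x : Pi0 l) :
    ((pa l).toLinearMap ^ (k+1)) x = ((pa l).toLinearMap ^ k) (pa l x) := by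
  rw [pow_succ, Module.End.mul_apply]; rfl

lemma pderiv_Uv (m : Fin l) (n : ℕ) :
    pderiv (m, n) (K.Uv j 0) = if n = 0 then C (cc K j m) else 0 := by
  rw [Uv_eq, map_sum]
  split
  · next h =>
      subst h
      rw [Finset.sum_eq_single m]
      · rw [Derivation.map_smul, pderiv_X', if_pos rfl, smul_eq_C_mul, mul_one]
      · intro b _ hb
        rw [Derivation.map_smul, pderiv_X', if_neg (by simp [Ne.symm hb]), smul_zero]
      · intro h; simp at h
  · next h =>
      refine Finset.sum_eq_zero fun b _ => ?_
      rw [Derivation.map_smul, pderiv_X', if_neg (by simp [h]), smul_zero]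

lemma pderiv_FdB (m : Fin l) (n n' : ℕ) :
    pderiv (m, n) (K.FdB j n') = cc K j m • beta K j n n' := by
  induction n' generalizing n with
  | zero =>
      show pderiv (m, n) (1 : Pi0 l) = cc K j m • beta K j n 0
      have h0 : beta K j n 0 = 0 := by cases n <;> rfl
      rw [h0, smul_zero, pderiv_one]
  | succ n' ih =>
      show pderiv (m, n) (-(K.Uv j 0) * K.FdB j n' + pa l (K.FdB j n')) = _
      cases n with
      | zero =>
          rw [map_add, pderiv_mul, map_neg, pderiv_Uv, if_pos rfl, pd_pa_zero, ih,
            Derivation.map_smul]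
          have hb : beta K j 0 (n'+1) = Tj K j (beta K j 0 n') + (-(K.FdB j n')) := rfl
          rw [hb, Tj_apply]
          simp only [smul_eq_C_mul]
          ring
      | succ k =>
          rw [map_add, pderiv_mul, map_neg, pderiv_Uv, if_neg (Nat.succ_ne_zero k),
            pd_pa_succ, ih, ih, Derivation.map_smul]
          have hb : beta K j (k+1) (n'+1) = Tj K j (beta K j (k+1) n') + beta K j k n' := rfl
          rw [hb, Tj_apply]
          simp only [smul_eq_C_mul]
          ring

/-- The partial sums `Φ_{n'}(g) = ∑_{n<n'} (-1)^n T^n (β_{n,n'} g)`. -/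
def Phi (n' : ℕ) (g : Pi0 l) : Pi0 l :=
  ∑ n ∈ Finset.range n', ((-1:ℂ)^n) • ((Tj K j ^ n) (beta K j n n' * g))

lemma Phi_ext (M n' : ℕ) (h : n' ≤ M) (g : Pi0 l) :
    ∑ n ∈ Finset.range M, ((-1:ℂ)^n) • ((Tj K j ^ n) (beta K j n n' * g))
      = Phi K j n' g := by
  symm
  apply Finset.sum_subset (Finset.range_subset_range.2 h)
  intro x _ hx
  rw [beta_vanish K j n' x (by simpa using hx), zero_mul, map_zero, smul_zero]

lemma Phi_succ (n' : ℕ) (g : Pi0 l) :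
    Phi K j (n'+1) g = -Phi K j n' (pa l g) - K.FdB j n' * g := by
  classical
  set A : ℕ → Pi0 l := fun n => ((-1:ℂ)^n) • ((Tj K j ^ (n+1)) (beta K j n n' * g)) with hA
  have hterm : ∀ n ∈ Finset.range (n'+1),
      ((-1:ℂ)^n) • ((Tj K j ^ n) (beta K j n (n'+1) * g))
      = (A n - ((-1:ℂ)^n) • ((Tj K j ^ n) (beta K j n n' * pa l g)))
        + ((-1:ℂ)^n) • ((Tj K j ^ n)
            ((Nat.casesOn n (-(K.FdB j n')) (fun k => beta K j k n') : Pi0 l) * g)) := by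
    intro n _
    have hbeta : beta K j n (n'+1)
        = Tj K j (beta K j n n')
          + (Nat.casesOn n (-(K.FdB j n')) (fun k => beta K j k n') : Pi0 l) := by
      cases n <;> rfl
    have hmul : beta K j n (n'+1) * g
        = (Tj K j (beta K j n n' * g) - beta K j n n' * pa l g)
          + (Nat.casesOn n (-(K.FdB j n')) (fun k => beta K j k n') : Pi0 l) * g := by
      rw [hbeta, add_mul, Tj_mul]; ring
    rw [hmul, map_add, map_sub, smul_add, smul_sub, hA, ← Tpow_succ_apply]
  rw [Phi, Finset.sum_congr rfl hterm, Finset.sum_add_distrib, Finset.sum_sub_distrib]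
  have h2 : ∑ n ∈ Finset.range (n'+1), ((-1:ℂ)^n) • ((Tj K j ^ n) (beta K j n n' * pa l g))
      = Phi K j n' (pa l g) := Phi_ext K j (n'+1) n' (Nat.le_succ n') (pa l g)
  have h1 : ∑ n ∈ Finset.range (n'+1), A n = ∑ n ∈ Finset.range n', A n := by
    rw [Finset.sum_range_succ]
    have hz : A n' = 0 := by
      show ((-1:ℂ)^n') • ((Tj K j ^ (n'+1)) (beta K j n' n' * g)) = 0
      rw [beta_vanish K j n' n' le_rfl, zero_mul, map_zero, smul_zero]
    rw [hz, add_zero]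
  have h3 : ∑ n ∈ Finset.range (n'+1), ((-1:ℂ)^n) • ((Tj K j ^ n)
      ((Nat.casesOn n (-(K.FdB j n')) (fun k => beta K j k n') : Pi0 l) * g))
      = (∑ n ∈ Finset.range n', -A n) + (-(K.FdB j n') * g) := by
    rw [Finset.sum_range_succ']
    congr 1
    · refine Finset.sum_congr rfl fun n _ => ?_
      show ((-1:ℂ)^(n+1)) • ((Tj K j ^ (n+1)) (beta K j n n' * g)) = -A n
      rw [hA, pow_succ]
      module
    · rw [pow_zero, one_smul, pow_zero, Module.End.one_apply]
      rfl
  rw [h1, h2, h3, Finset.sum_neg_distrib]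
  ring

lemma Tj_Phi (n' : ℕ) (g : Pi0 l) :
    Tj K j (Phi K j n' g)
      = -(K.FdB j n' * g) + ((-1:ℂ)^n') • (((pa l).toLinearMap ^ n') g) := by
  induction n' generalizing g with
  | zero =>
      have h0 : Phi K j 0 g = 0 := by rw [Phi, Finset.range_zero, Finset.sum_empty]
      rw [h0, map_zero]
      show (0 : Pi0 l) = -((1:Pi0 l) * g) + ((1:ℂ)) • (((pa l).toLinearMap ^ 0) g)
      rw [one_mul, one_smul, pow_zero, Module.End.one_apply]
      ring
  | succ n' ih =>
      rw [Phi_succ, map_sub, map_neg, ih, Tj_mul, ← FdB_succ, ← papow_succ_apply, pow_succ]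
      module

/-- The derivation measuring `[∂/∂u_m^{(n)}, Q_j]`, divided by `c_m`. -/
def Wd (n : ℕ) : Derivation ℂ (Pi0 l) (Pi0 l) :=
  mkDerivation ℂ (fun p => -(K.B j p.1.succ) • beta K j n p.2)

lemma pderiv_Q (m : Fin l) (n : ℕ) (P : Pi0 l) :
    pderiv (m, n) (K.Q j P) = K.Q j (pderiv (m, n) P) + cc K j m • (Wd K j n P) := by
  have key : ⁅(pderiv (m,n) : Derivation ℂ (Pi0 l) (Pi0 l)), K.Q j⁆ = cc K j m • Wd K j n := by
    apply derivation_ext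
    intro p
    rw [Derivation.commutator_apply, Derivation.smul_apply, Q_X]
    rw [Derivation.map_smul, pderiv_FdB, pderiv_X']
    have hz : K.Q j (if (m,n) = p then (1:Pi0 l) else 0) = 0 := by split <;> simp
    rw [hz, sub_zero]
    rw [show Wd K j n (X p) = -(K.B j p.1.succ) • beta K j n p.2 from mkDerivation_X _ _ _]
    rw [smul_comm]
  have h := congrArg (fun D : Derivation ℂ (Pi0 l) (Pi0 l) => D P) key
  simp only [Derivation.commutator_apply, Derivation.smul_apply] at h
  linear_combination h

lemma twisted_adjoint (m : Fin l) (S : Pi0 l) (N : ℕ)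
    (hS : ∀ n, N ≤ n → pderiv (m, n) S = 0) :
    ∑ n ∈ Finset.range (N+1), ((-1:ℂ)^n) • ((Tj K j ^ n) (pderiv (m, n) (Tj K j S)))
      = -(cc K j m) • S := by
  have ht0 : pderiv (m,0) (Tj K j S) = Tj K j (pderiv (m,0) S) - C (cc K j m) * S := by
    rw [Tj_apply, map_sub, pd_pa_zero, pderiv_mul, pderiv_Uv, if_pos rfl, Tj_apply]
    ring
  have hts : ∀ n, pderiv (m,n+1) (Tj K j S)
      = Tj K j (pderiv (m,n+1) S) + pderiv (m,n) S := by
    intro n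
    rw [Tj_apply, map_sub, pd_pa_succ, pderiv_mul, pderiv_Uv, if_neg (Nat.succ_ne_zero n),
      Tj_apply]
    ring
  set f : ℕ → Pi0 l := fun n => ((-1:ℂ)^n) • ((Tj K j ^ (n+1)) (pderiv (m, n) S)) with hf
  rw [Finset.sum_range_succ']
  have hstep : ∀ n ∈ Finset.range N,
      ((-1:ℂ)^(n+1)) • ((Tj K j ^ (n+1)) (pderiv (m, n+1) (Tj K j S))) = f (n+1) - f n := by
    intro n _
    show _ = ((-1:ℂ)^(n+1)) • ((Tj K j ^ (n+1+1)) (pderiv (m, n+1) S))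
        - ((-1:ℂ)^n) • ((Tj K j ^ (n+1)) (pderiv (m, n) S))
    rw [hts, map_add, smul_add, ← Tpow_succ_apply, pow_succ (-1:ℂ) n]
    module
  rw [Finset.sum_congr rfl hstep, Finset.sum_range_sub f]
  have hfN : f N = 0 := by
    show ((-1:ℂ)^N) • ((Tj K j ^ (N+1)) (pderiv (m, N) S)) = 0
    rw [hS N le_rfl, map_zero, smul_zero]
  have hf0 : f 0 = Tj K j (pderiv (m, 0) S) := by
    show ((-1:ℂ)^0) • ((Tj K j ^ (0+1)) (pderiv (m, 0) S)) = _
    rw [pow_zero, one_smul, pow_one]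
  rw [hfN, hf0, pow_zero, one_smul, pow_zero (Tj K j), Module.End.one_apply, ht0]
  rw [smul_eq_C_mul, map_neg]
  ring

end TodaAux3

section TodaAux4

open AffineGCM

variable {l : ℕ} (K : AffineGCM l) (j : Fin (l+1))

lemma Tpow_succ_apply' (k : ℕ) (x : Pi0 l) :
    (Tj K j ^ (k+1)) x = Tj K j ((Tj K j ^ k) x) := by
  rw [pow_succ', Module.End.mul_apply]

/-- A bound beyond which all partial derivatives of `P` vanish. -/
def bnd (P : Pi0 l) : ℕ := (P.vars.sup (fun p => p.2)) + 1

lemma pderiv_bnd (P : Pi0 l) (m : Fin l) (n : ℕ) (h : bnd P ≤ n) :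
    pderiv (m, n) P = 0 := by
  apply pderiv_eq_zero_of_notMem_vars
  intro hmem
  have : n ≤ P.vars.sup (fun p => p.2) := Finset.le_sup (f := fun p => p.2) hmem
  unfold bnd at h
  omega

lemma vars_bnd (P : Pi0 l) {N : ℕ} (h : bnd P ≤ N) :
    (P.vars : Set (Fin l × ℕ)) ⊆ ↑((Finset.univ : Finset (Fin l)) ×ˢ Finset.range N) := by
  intro p hp
  simp only [Finset.coe_product, Set.mem_prod, Finset.coe_range, Set.mem_Iio,
    Finset.coe_univ, Set.mem_univ, true_and]
  have hmem : p ∈ P.vars := by exact_mod_cast hp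
  have : p.2 ≤ P.vars.sup (fun p => p.2) := Finset.le_sup (f := fun p => p.2) hmem
  unfold bnd at h
  omega

lemma finsum_cut (P : Pi0 l) (m : Fin l) (M : ℕ) (h : bnd P ≤ M) :
    ∑ᶠ n : ℕ, ((-(pa l).toLinearMap) ^ n) (pderiv (m, n) P)
      = ∑ n ∈ Finset.range M, ((-1:ℂ)^n) • (((pa l).toLinearMap ^ n) (pderiv (m, n) P)) := by
  rw [finsum_eq_sum_of_support_subset _ (s := Finset.range M)]
  · exact Finset.sum_congr rfl fun n _ => negpa_pow n _
  · intro n hn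
    simp only [Function.mem_support, ne_eq] at hn
    simp only [Finset.coe_range, Set.mem_Iio]
    by_contra hc
    exact hn (by rw [pderiv_bnd P m n (by omega), map_zero])

lemma varder_expand (P : Pi0 l) (i : Fin (l+1)) (M : ℕ) (h : bnd P ≤ M) :
    K.varder i P = ∑ n ∈ Finset.range M, ((-1:ℂ)^n) •
      (((pa l).toLinearMap ^ n) (∑ m : Fin l, K.B i m.succ • pderiv (m, n) P)) := by
  rw [AffineGCM.varder]
  have : ∀ m : Fin l, (∑ᶠ n : ℕ, ((-(pa l).toLinearMap) ^ n) (pderiv (m, n) P))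
      = ∑ n ∈ Finset.range M, ((-1:ℂ)^n) • (((pa l).toLinearMap ^ n) (pderiv (m, n) P)) :=
    fun m => finsum_cut P m M h
  calc ∑ m : Fin l, K.B i m.succ • ∑ᶠ n : ℕ, ((-(pa l).toLinearMap) ^ n) (pderiv (m, n) P)
      = ∑ m : Fin l, ∑ n ∈ Finset.range M,
          K.B i m.succ • (((-1:ℂ)^n) • (((pa l).toLinearMap ^ n) (pderiv (m, n) P))) := by
        refine Finset.sum_congr rfl fun m _ => ?_
        rw [this m, Finset.smul_sum]
    _ = ∑ n ∈ Finset.range M, ∑ m : Fin l,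
          K.B i m.succ • (((-1:ℂ)^n) • (((pa l).toLinearMap ^ n) (pderiv (m, n) P))) :=
        Finset.sum_comm
    _ = _ := by
        refine Finset.sum_congr rfl fun n _ => ?_
        rw [map_sum, Finset.smul_sum]
        refine Finset.sum_congr rfl fun m _ => ?_
        rw [map_smul, smul_comm]

end TodaAux4

section TodaAux5

open AffineGCM

variable {l : ℕ} (K : AffineGCM l) (j : Fin (l+1))

/-- weighted gradient components. -/
def gg (H : Pi0 l) (n : ℕ) : Pi0 l := ∑ m : Fin l, K.B j m.succ • pderiv (m, n) H

lemma varder_expand' (H : Pi0 l) {N : ℕ} (h : bnd H ≤ N) :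
    K.varder j H = ∑ n ∈ Finset.range N, ((-1:ℂ)^n) •
      (((pa l).toLinearMap ^ n) (gg K j H n)) := by
  simp only [gg]
  exact varder_expand K H j N h

lemma EXP_shape (H : Pi0 l) {N : ℕ} (hb : bnd H ≤ N)
    (D : Derivation ℂ (Pi0 l) (Pi0 l)) (W : ℕ → Pi0 l)
    (hD : ∀ p : Fin l × ℕ, D (X p) = -(K.B j p.1.succ) • W p.2) :
    D H = -∑ n' ∈ Finset.range N, W n' * gg K j H n' := by
  rw [EXP D H ((Finset.univ : Finset (Fin l)) ×ˢ Finset.range N) (vars_bnd H hb),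
    Finset.sum_product, Finset.sum_comm, ← Finset.sum_neg_distrib]
  refine Finset.sum_congr rfl fun n' _ => ?_
  rw [gg, Finset.mul_sum, ← Finset.sum_neg_distrib]
  refine Finset.sum_congr rfl fun m _ => ?_
  rw [hD, neg_smul, neg_mul]
  simp only [smul_eq_C_mul]
  ring

/-- The fundamental element `-S + ∑ Φ_{n'}(g_{n'})`. -/
def Rt (H S : Pi0 l) (N : ℕ) : Pi0 l :=
  -S + ∑ n' ∈ Finset.range N, Phi K j n' (gg K j H n')

lemma Qdelta (H S : Pi0 l) {N : ℕ} (hQH : K.Q j H = Tj K j S)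
    (hbH : bnd H ≤ N) (hbS : bnd S ≤ N) (m : Fin l) :
    K.Q j (∑ᶠ n : ℕ, ((-(pa l).toLinearMap) ^ n) (pderiv (m, n) H))
      = cc K j m • Rt K j H S N := by
  have hWd : ∀ n : ℕ, Wd K j n H = -∑ n' ∈ Finset.range N, beta K j n n' * gg K j H n' :=
    fun n => EXP_shape K j H hbH (Wd K j n) (beta K j n) (fun p => mkDerivation_X _ _ _)
  rw [finsum_cut H m (N+1) (by omega), map_sum]
  have hterm : ∀ n ∈ Finset.range (N+1),
      K.Q j (((-1:ℂ)^n) • (((pa l).toLinearMap ^ n) (pderiv (m, n) H)))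
      = ((-1:ℂ)^n) • ((Tj K j ^ n) (pderiv (m, n) (Tj K j S)))
        - cc K j m • (((-1:ℂ)^n) • ((Tj K j ^ n) (Wd K j n H))) := by
    intro n _
    rw [Derivation.map_smul, Q_papow]
    have h1 : K.Q j (pderiv (m, n) H) = pderiv (m, n) (K.Q j H) - cc K j m • (Wd K j n H) := by
      linear_combination -pderiv_Q K j m n H
    rw [h1, hQH, map_sub, map_smul, smul_sub, smul_comm ((-1:ℂ)^n) (cc K j m)]
  rw [Finset.sum_congr rfl hterm, Finset.sum_sub_distrib,
    twisted_adjoint K j m S N (fun n hn => pderiv_bnd S m n (le_trans hbS hn))]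
  have h2 : ∑ n ∈ Finset.range (N+1), cc K j m • (((-1:ℂ)^n) • ((Tj K j ^ n) (Wd K j n H)))
      = cc K j m • (- ∑ n' ∈ Finset.range N, Phi K j n' (gg K j H n')) := by
    rw [← Finset.smul_sum]
    congr 1
    calc ∑ n ∈ Finset.range (N+1), ((-1:ℂ)^n) • ((Tj K j ^ n) (Wd K j n H))
        = ∑ n ∈ Finset.range (N+1), ∑ n' ∈ Finset.range N,
            -(((-1:ℂ)^n) • ((Tj K j ^ n) (beta K j n n' * gg K j H n'))) := by
          refine Finset.sum_congr rfl fun n _ => ?_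
          rw [hWd n, map_neg, map_sum, smul_neg, Finset.smul_sum, ← Finset.sum_neg_distrib]
      _ = ∑ n' ∈ Finset.range N, ∑ n ∈ Finset.range (N+1),
            -(((-1:ℂ)^n) • ((Tj K j ^ n) (beta K j n n' * gg K j H n'))) := Finset.sum_comm
      _ = -∑ n' ∈ Finset.range N, Phi K j n' (gg K j H n') := by
          rw [← Finset.sum_neg_distrib]
          refine Finset.sum_congr rfl fun n' hn' => ?_
          rw [Finset.sum_neg_distrib,
            Phi_ext K j (N+1) n' (by simp only [Finset.mem_range] at hn'; omega) (gg K j H n')]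
  rw [h2, Rt]
  rw [smul_neg, smul_add]
  module

lemma TRt (H S : Pi0 l) {N : ℕ} (hQH : K.Q j H = Tj K j S)
    (hbH : bnd H ≤ N) (hbS : bnd S ≤ N) :
    Tj K j (Rt K j H S N) = K.varder j H := by
  have hQH2 : K.Q j H = -∑ n' ∈ Finset.range N, K.FdB j n' * gg K j H n' :=
    EXP_shape K j H hbH (K.Q j) (K.FdB j) (fun p => Q_X K j p)
  rw [Rt, map_add, map_neg, map_sum]
  have hsum : ∑ n' ∈ Finset.range N, Tj K j (Phi K j n' (gg K j H n'))
      = ∑ n' ∈ Finset.range N, (-(K.FdB j n' * gg K j H n')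
          + ((-1:ℂ)^n') • (((pa l).toLinearMap ^ n') (gg K j H n'))) :=
    Finset.sum_congr rfl fun n' _ => Tj_Phi K j n' (gg K j H n')
  rw [hsum, Finset.sum_add_distrib, Finset.sum_neg_distrib]
  rw [varder_expand' K j H hbH]
  have h3 : Tj K j S = -∑ n' ∈ Finset.range N, K.FdB j n' * gg K j H n' := by
    rw [← hQH]; exact hQH2
  linear_combination -h3

lemma xiv (H : Pi0 l) : K.xi H (K.Uv j 0) = pa l (K.varder j H) := by
  rw [Uv_eq, map_sum]
  have h1 : ∀ m : Fin l, K.xi H (cc K j m • X (m, 0)) = cc K j m • pa l (K.varder m.succ H) := by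
    intro m
    rw [Derivation.map_smul, xi_X]
    congr 1
  rw [Finset.sum_congr rfl (fun m _ => h1 m)]
  have h2 : ∑ m : Fin l, cc K j m • pa l (K.varder m.succ H)
      = pa l (∑ m : Fin l, cc K j m • K.varder m.succ H) := by
    rw [map_sum]
    exact Finset.sum_congr rfl fun m _ => (Derivation.map_smul _ _ _).symm
  have hsum : ∑ m : Fin l, cc K j m • K.varder m.succ H = K.varder j H := by
    simp only [AffineGCM.varder, Finset.smul_sum, smul_smul]
    rw [Finset.sum_comm]
    refine Finset.sum_congr rfl fun k _ => ?_
    rw [← Finset.sum_smul, cc_B K j k.succ]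
  rw [h2, hsum]

lemma xiB (H : Pi0 l) (n : ℕ) :
    K.xi H (K.FdB j (n+1))
      = Tj K j (K.xi H (K.FdB j n)) - pa l (K.varder j H) * K.FdB j n := by
  show K.xi H (-(K.Uv j 0) * K.FdB j n + pa l (K.FdB j n)) = _
  rw [map_add, xi_pa]
  have hmul : K.xi H (-(K.Uv j 0) * K.FdB j n)
      = -(K.xi H (K.Uv j 0) * K.FdB j n) - K.Uv j 0 * K.xi H (K.FdB j n) := by
    have hl := (K.xi H).leibniz (-(K.Uv j 0)) (K.FdB j n)
    rw [map_neg] at hl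
    rw [hl]
    simp only [smul_eq_mul]
    ring
  rw [hmul, xiv, Tj_apply]
  ring

lemma TRn (H S : Pi0 l) {N : ℕ} (hQH : K.Q j H = Tj K j S)
    (hbH : bnd H ≤ N) (hbS : bnd S ≤ N) (n : ℕ) :
    (Tj K j ^ (n+1)) (Rt K j H S N)
      = K.varder j H * K.FdB j n - K.xi H (K.FdB j n) := by
  induction n with
  | zero =>
      rw [pow_one, TRt K j H S hQH hbH hbS]
      show _ = K.varder j H * (1 : Pi0 l) - K.xi H (1 : Pi0 l)
      rw [mul_one, Derivation.map_one_eq_zero, sub_zero]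
  | succ n ih =>
      rw [Tpow_succ_apply', ih, map_sub, xiB, FdB_succ, Tj_mul]
      simp only [Tj_apply]
      ring

lemma QV (H S : Pi0 l) {N : ℕ} (hQH : K.Q j H = Tj K j S)
    (hbH : bnd H ≤ N) (hbS : bnd S ≤ N) (k : Fin l) :
    K.Q j (K.varder k.succ H) = K.B j k.succ • Rt K j H S N := by
  rw [AffineGCM.varder, map_sum]
  have h1 : ∀ m : Fin l,
      K.Q j (K.B k.succ m.succ • ∑ᶠ n : ℕ, ((-(pa l).toLinearMap) ^ n) (pderiv (m, n) H))
      = (cc K j m * K.B m.succ k.succ) • Rt K j H S N := by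
    intro m
    rw [Derivation.map_smul, Qdelta K j H S hQH hbH hbS m, smul_smul]
    rw [B_symm K k.succ m.succ, mul_comm]
  rw [Finset.sum_congr rfl (fun m _ => h1 m), ← Finset.sum_smul, cc_B K j k.succ]

end TodaAux5

/-- if `H ∈ π₀` is a density of a Toda integral, i.e. for every `j` there is
`S_j ∈ π₀` with `Q_j(H) = ∂ S_j − u_j^{(0)} S_j`, then
`Q_j ∘ ξ_H − ξ_H ∘ Q_j = −(δ_j H) · Q_j` for every `j`. -/
theorem commutator_with_hamiltonian_vf (l : ℕ) (hl : 1 ≤ l) (K : AffineGCM l)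
    (H : Pi0 l)
    (hH : ∀ j : Fin (l+1), ∃ S : Pi0 l, K.Q j H = pa l S - K.Uv j 0 * S) :
    ∀ (j : Fin (l+1)) (P : Pi0 l),
      K.Q j (K.xi H P) - K.xi H (K.Q j P) = -(K.varder j H) * K.Q j P := by
  intro j P
  obtain ⟨S, hS⟩ := hH j
  have hQH : K.Q j H = Tj K j S := by rw [hS, Tj_apply]
  set N : ℕ := max (bnd H) (bnd S) with hN
  have hbH : bnd H ≤ N := le_max_left _ _
  have hbS : bnd S ≤ N := le_max_right _ _
  have hmain : ⁅K.Q j, K.xi H⁆ + K.varder j H • K.Q j = 0 := by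
    apply derivation_ext
    intro p
    rw [Derivation.add_apply, Derivation.commutator_apply, Derivation.smul_apply,
      Derivation.zero_apply, Q_X, xi_X]
    rw [Q_papow, QV K j H S hQH hbH hbS p.1, map_smul, TRn K j H S hQH hbH hbS p.2]
    rw [Derivation.map_smul]
    rw [smul_comm (K.varder j H) (-(K.B j p.1.succ))]
    simp only [neg_smul, smul_sub, smul_eq_mul]
    module
  have h := congrArg (fun D : Derivation ℂ (Pi0 l) (Pi0 l) => D P) hmain
  simp only [Derivation.add_apply, Derivation.commutator_apply, Derivation.smul_apply,
    Derivation.zero_apply, smul_eq_mul] at h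
  linear_combination h
end
end

section
/- The Gelfand–Dickey–Dorfman bracket is antisymmetric up to total derivatives: for all P, R ∈ π₀, the element ξ_P(R) + ξ_R(P) lies in the image ∂(π₀) of the derivation ∂. -/
open MvPolynomial

noncomputable section

variable {l : ℕ}

/-- The variational derivative `δ_i P := ∑_{j=1}^l c_{ij} ∑_{n ≥ 0} (-∂)^n (∂P/∂u_j^{(n)})`
associated to a symmetric matrix `c` of complex numbers. -/
def vard (c : Matrix (Fin l) (Fin l) ℂ) (i : Fin l) (P : Pi0 l) : Pi0 l :=
  ∑ j : Fin l, c i j • ∑ᶠ n : ℕ, ((-(pa l).toLinearMap) ^ n) (pderiv (j, n) P)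

/-- The hamiltonian vector field `ξ_P`: the unique `ℂ`-derivation of `π₀` with
`ξ_P u_i^{(n)} = ∂^{n+1}(δ_i P)`. -/
def xic (c : Matrix (Fin l) (Fin l) ℂ) (P : Pi0 l) : Derivation ℂ (Pi0 l) (Pi0 l) :=
  mkDerivation ℂ (fun p => ((pa l).toLinearMap ^ (p.2 + 1)) (vard c p.1 P))

lemma hsupp (Q : Pi0 l) (g : Fin l × ℕ → Pi0 l) :
    (Function.support fun p => pderiv p Q * g p).Finite := by
  apply Set.Finite.subset Q.vars.finite_toSet
  intro p hp
  by_contra h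
  exact hp (by simp [pderiv_eq_zero_of_notMem_vars h])

/-- chain rule -/
lemma deriv_apply (D : Derivation ℂ (Pi0 l) (Pi0 l)) (Q : Pi0 l) :
    D Q = ∑ᶠ p : Fin l × ℕ, pderiv p Q * D (X p) := by
  induction Q using MvPolynomial.induction_on with
  | C a => simp [derivation_C]
  | add p q hp hq =>
      rw [map_add, hp, hq, ← finsum_add_distrib (hsupp p _) (hsupp q _)]
      simp [add_mul]
  | mul_X q i hq =>
      have h1 : ∀ p : Fin l × ℕ, pderiv p (q * X i) * D (X p)
          = (pderiv p q * D (X p)) * X i + q * pderiv p (X i) * D (X p) := by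
        intro p
        rw [Derivation.leibniz, smul_eq_mul, smul_eq_mul]
        ring
      have h2 : (∑ᶠ p, pderiv p (q * X i) * D (X p))
          = ∑ᶠ p, ((pderiv p q * D (X p)) * X i + q * pderiv p (X i) * D (X p)) :=
        finsum_congr h1
      have hf1 : (Function.support fun p : Fin l × ℕ => (pderiv p q * D (X p)) * X i).Finite := by
        apply (hsupp q (fun p => D (X p))).subset
        intro p hp
        simp only [Function.mem_support] at hp ⊢
        intro h; exact hp (by rw [h, zero_mul])
      have hf2 : (Function.support fun p : Fin l × ℕ => q * pderiv p (X i) * D (X p)).Finite := by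
        apply Set.Finite.subset (Set.finite_singleton i)
        intro p hp
        simp only [Function.mem_support] at hp
        by_contra h
        exact hp (by simp [pderiv_X_of_ne (Ne.symm h)])
      have h3 : (∑ᶠ p : Fin l × ℕ, q * pderiv p (X i) * D (X p)) = q * D (X i) := by
        rw [finsum_eq_single _ i (fun p hp => by simp [pderiv_X_of_ne (Ne.symm hp)])]
        simp
      rw [Derivation.leibniz, hq, smul_eq_mul, smul_eq_mul, h2,
        finsum_add_distrib hf1 hf2, ← finsum_mul _ _, h3]
      ring

/-- integration by parts -/
lemma ibp (n : ℕ) (a b : Pi0 l) :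
    a * (((pa l).toLinearMap ^ n) b) - (((-(pa l).toLinearMap) ^ n) a) * b
      ∈ LinearMap.range (pa l).toLinearMap := by
  induction n generalizing b with
  | zero => simp
  | succ n ih =>
    have e1 : ((pa l).toLinearMap ^ (n+1)) b = ((pa l).toLinearMap ^ n) (pa l b) := by
      rw [pow_succ]; rfl
    have e2 : ((-(pa l).toLinearMap) ^ (n+1)) a
        = -(pa l ((((-(pa l).toLinearMap)) ^ n) a)) := by
      rw [pow_succ']; rfl
    set x := ((-(pa l).toLinearMap) ^ n) a with hx
    have key : a * (((pa l).toLinearMap ^ (n+1)) b) - (((-(pa l).toLinearMap) ^ (n+1)) a) * b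
        = (a * (((pa l).toLinearMap ^ n) (pa l b)) - x * (pa l b)) + (pa l) (x * b) := by
      rw [e1, e2, Derivation.leibniz, smul_eq_mul, smul_eq_mul]; ring
    rw [key]
    exact Submodule.add_mem _ (ih (pa l b)) ⟨x * b, rfl⟩

/-- the Gelfand–Dickey–Dorfman bracket is antisymmetric up to total
derivatives: `ξ_P(R) + ξ_R(P) ∈ ∂(π₀)`. -/
theorem bracket_antisymmetric_mod_derivatives (l : ℕ) (hl : 1 ≤ l)
    (c : Matrix (Fin l) (Fin l) ℂ) (hc : c.IsSymm) (P R : Pi0 l) :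
    ∃ S : Pi0 l, xic c P R + xic c R P = pa l S := by
  classical
  set d := (pa l).toLinearMap with hd
  set N : ℕ := (P.vars ∪ R.vars).sup (fun p => p.2) + 1 with hNdef
  have hvars : ∀ Q : Pi0 l, Q.vars ⊆ P.vars ∪ R.vars →
      ∀ i : Fin l, ∀ n : ℕ, N ≤ n → pderiv (i, n) Q = 0 := by
    intro Q hQ i n hn
    apply pderiv_eq_zero_of_notMem_vars
    intro h
    have := Finset.le_sup (f := fun p : Fin l × ℕ => p.2) (hQ h)
    simp only at this
    omega
  set s : Finset (Fin l × ℕ) := Finset.univ ×ˢ Finset.range N with hs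
  set w : Fin l → Pi0 l → Pi0 l :=
    fun i Q => ∑ n ∈ Finset.range N, ((-d) ^ n) (pderiv (i, n) Q) with hw
  have hvard : ∀ Q : Pi0 l, Q.vars ⊆ P.vars ∪ R.vars → ∀ i,
      vard c i Q = ∑ j, c i j • w j Q := by
    intro Q hQ i
    unfold vard
    apply Finset.sum_congr rfl
    intro j _
    congr 1
    apply finsum_eq_sum_of_support_subset
    intro n hn
    simp only [Function.mem_support] at hn
    simp only [Finset.coe_range, Set.mem_Iio]
    by_contra h
    exact hn (by rw [hvars Q hQ j n (le_of_not_gt h), map_zero])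
  have hxic : ∀ Q1 Q2 : Pi0 l, Q2.vars ⊆ P.vars ∪ R.vars →
      xic c Q1 Q2 = ∑ p ∈ s, pderiv p Q2 * (d ^ (p.2 + 1)) (vard c p.1 Q1) := by
    intro Q1 Q2 hQ2
    rw [deriv_apply]
    rw [finsum_eq_sum_of_support_subset]
    · apply Finset.sum_congr rfl
      intro p _
      rw [xic, mkDerivation_X]
    · intro p hp
      simp only [Function.mem_support] at hp
      simp only [hs, Finset.coe_product, Finset.coe_univ, Finset.coe_range,
        Set.mem_prod, Set.mem_univ, Set.mem_Iio, true_and]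
      by_contra h
      exact hp (by rw [hvars Q2 hQ2 p.1 p.2 (le_of_not_gt h), zero_mul])
  have hsub : P.vars ⊆ P.vars ∪ R.vars := Finset.subset_union_left
  have hsub' : R.vars ⊆ P.vars ∪ R.vars := Finset.subset_union_right
  set T := LinearMap.range d with hT
  suffices h : xic c P R + xic c R P ∈ T by
    obtain ⟨S, hS⟩ := h
    exact ⟨S, hS.symm⟩
  set A1 := ∑ p ∈ s, pderiv p R * (d ^ (p.2 + 1)) (vard c p.1 P) with hA1
  set A2 := ∑ p ∈ s, pderiv p P * (d ^ (p.2 + 1)) (vard c p.1 R) with hA2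
  set B1 := ∑ p ∈ s, ((-d) ^ p.2) (pderiv p R) * d (vard c p.1 P) with hB1
  set B2 := ∑ p ∈ s, ((-d) ^ p.2) (pderiv p P) * d (vard c p.1 R) with hB2
  have powsucc : ∀ (n : ℕ) (v : Pi0 l), (d ^ (n + 1)) v = (d ^ n) (d v) := by
    intro n v; rw [pow_succ]; rfl
  have mem1 : A1 - B1 ∈ T := by
    rw [hA1, hB1, ← Finset.sum_sub_distrib]
    apply Submodule.sum_mem
    intro p _
    rw [powsucc]
    exact ibp p.2 (pderiv p R) (d (vard c p.1 P))
  have mem2 : A2 - B2 ∈ T := by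
    rw [hA2, hB2, ← Finset.sum_sub_distrib]
    apply Submodule.sum_mem
    intro p _
    rw [powsucc]
    exact ibp p.2 (pderiv p P) (d (vard c p.1 R))
  -- compute B1, B2
  have hB : ∀ Q1 Q2 : Pi0 l, Q1.vars ⊆ P.vars ∪ R.vars →
      (∑ p ∈ s, ((-d) ^ p.2) (pderiv p Q2) * d (vard c p.1 Q1))
        = ∑ i : Fin l, ∑ j : Fin l, c i j • (w i Q2 * d (w j Q1)) := by
    intro Q1 Q2 hQ1
    rw [hs, Finset.sum_product]
    apply Finset.sum_congr rfl
    intro i _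
    dsimp only
    rw [← Finset.sum_mul, hvard Q1 hQ1 i, map_sum, Finset.mul_sum]
    apply Finset.sum_congr rfl
    intro j _
    rw [map_smul, mul_smul_comm]
  have hB1' : B1 = ∑ i : Fin l, ∑ j : Fin l, c i j • (w i R * d (w j P)) := hB P R hsub
  have hB2' : B2 = ∑ i : Fin l, ∑ j : Fin l, c i j • (w j P * d (w i R)) := by
    rw [hB2, hB R P hsub', Finset.sum_comm]
    apply Finset.sum_congr rfl
    intro i _
    apply Finset.sum_congr rfl
    intro j _
    rw [hc.apply j i]
  have mem3 : B1 + B2 ∈ T := by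
    rw [hB1', hB2', ← Finset.sum_add_distrib]
    apply Submodule.sum_mem
    intro i _
    rw [← Finset.sum_add_distrib]
    apply Submodule.sum_mem
    intro j _
    rw [← smul_add]
    apply Submodule.smul_mem
    refine ⟨w i R * w j P, ?_⟩
    show pa l (w i R * w j P) = _
    rw [Derivation.leibniz, smul_eq_mul, smul_eq_mul]
    simp only [hd, Derivation.coeFn_coe]
  have hfin : xic c P R + xic c R P = (A1 - B1) + (A2 - B2) + (B1 + B2) := by
    rw [hxic P R hsub', hxic R P hsub, ← hA1, ← hA2]; ring
  rw [hfin]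
  exact Submodule.add_mem _ (Submodule.add_mem _ mem1 mem2) mem3
end
end

section
/- The map P ↦ ξ_P intertwines the bracket with the commutator of derivations: for all P, R ∈ π₀, ξ_{ξ_P(R)} = ξ_P ∘ ξ_R − ξ_R ∘ ξ_P as derivations of π₀. -/
open MvPolynomial

set_option maxHeartbeats 1000000

noncomputable section

variable {l : ℕ}

namespace HamAux

variable {l : ℕ}

/-- Abbreviation for the linear map of `∂`. -/
def DD (l : ℕ) : Pi0 l →ₗ[ℂ] Pi0 l := (pa l).toLinearMap

lemma DD_apply (A : Pi0 l) : DD l A = pa l A := rfl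

lemma pa_X (p : Fin l × ℕ) : pa l (X p) = X (p.1, p.2 + 1) := by
  have := mkDerivation_X (R := ℂ) (fun q : Fin l × ℕ => (X (q.1, q.2 + 1) : Pi0 l)) p
  rw [pa]; exact this

lemma DD_X (j : Fin l) (n : ℕ) : DD l (X (j, n)) = X (j, n + 1) := pa_X _

lemma pd_pd_comm (v w : Fin l × ℕ) (A : Pi0 l) :
    pderiv v (pderiv w A) = pderiv w (pderiv v A) := by
  have h : ⁅(pderiv v : Derivation ℂ (Pi0 l) (Pi0 l)), (pderiv w : Derivation ℂ (Pi0 l) (Pi0 l))⁆ = 0 := by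
    apply derivation_ext
    intro i
    classical
    rw [Derivation.commutator_apply]
    rcases eq_or_ne i w with rfl | hw
    · rcases eq_or_ne i v with rfl | hv <;>
        simp [pderiv_X_self, pderiv_X_of_ne, *]
    · rcases eq_or_ne i v with rfl | hv <;>
        simp [pderiv_X_self, pderiv_X_of_ne, *]
  have := congrArg (fun (D : Derivation ℂ (Pi0 l) (Pi0 l)) => D A) h
  simpa [Derivation.commutator_apply, sub_eq_zero] using this

lemma pd_D_comm0 (j : Fin l) (A : Pi0 l) :
    pderiv ((j, 0) : Fin l × ℕ) (DD l A) = DD l (pderiv ((j, 0) : Fin l × ℕ) A) := by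
  have h : ⁅(pderiv ((j, 0) : Fin l × ℕ) : Derivation ℂ (Pi0 l) (Pi0 l)), pa l⁆ = 0 := by
    apply derivation_ext
    rintro ⟨i, m⟩
    classical
    rw [Derivation.commutator_apply, pa_X]
    rcases eq_or_ne ((i, m) : Fin l × ℕ) (j, 0) with h1 | h1
    · have : ((i, m + 1) : Fin l × ℕ) ≠ (j, 0) := by simp [Prod.ext_iff]
      simp [h1, pderiv_X_self, pderiv_X_of_ne this]
    · have : ((i, m + 1) : Fin l × ℕ) ≠ (j, 0) := by simp [Prod.ext_iff]
      simp [pderiv_X_of_ne h1, pderiv_X_of_ne this]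
  have := congrArg (fun (D : Derivation ℂ (Pi0 l) (Pi0 l)) => D A) h
  simpa [Derivation.commutator_apply, sub_eq_zero, DD_apply] using this

lemma pd_D_commS (j : Fin l) (n : ℕ) (A : Pi0 l) :
    pderiv ((j, n + 1) : Fin l × ℕ) (DD l A)
      = DD l (pderiv ((j, n + 1) : Fin l × ℕ) A) + pderiv ((j, n) : Fin l × ℕ) A := by
  have h : ⁅(pderiv ((j, n + 1) : Fin l × ℕ) : Derivation ℂ (Pi0 l) (Pi0 l)), pa l⁆
      = pderiv ((j, n) : Fin l × ℕ) := by
    apply derivation_ext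
    rintro ⟨i, m⟩
    classical
    rw [Derivation.commutator_apply, pa_X]
    rcases eq_or_ne ((i, m) : Fin l × ℕ) (j, n) with h1 | h1
    · obtain ⟨rfl, rfl⟩ : i = j ∧ m = n := by simpa [Prod.ext_iff] using h1
      have h2 : ((i, m + 1) : Fin l × ℕ) = (i, m + 1) := rfl
      simp [pderiv_X_self]
    · have h2 : ((i, m + 1) : Fin l × ℕ) ≠ (j, n + 1) := by
        simp only [ne_eq, Prod.ext_iff, not_and] at h1 ⊢
        rintro rfl h; exact h1 rfl (by omega)
      have h3 : ((i, m) : Fin l × ℕ) ≠ (j, n + 1) ∨ True := Or.inr trivial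
      rcases eq_or_ne ((i, m) : Fin l × ℕ) (j, n + 1) with h4 | h4
      · simp [h4, pderiv_X_self, pderiv_X_of_ne h2, pderiv_X_of_ne h1, pa_X]
      · simp [pderiv_X_of_ne h4, pderiv_X_of_ne h2, pderiv_X_of_ne h1]
  have := congrArg (fun (D : Derivation ℂ (Pi0 l) (Pi0 l)) => D A) h
  simp only [Derivation.commutator_apply] at this
  rw [DD_apply, DD_apply]
  linear_combination (norm := module) this


/-- `A` depends only on variables `u_j^{(n)}` with `n < N`. -/
def Bd (N : ℕ) (A : Pi0 l) : Prop :=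
  ∀ (j : Fin l) (n : ℕ), N ≤ n → pderiv ((j, n) : Fin l × ℕ) A = 0

lemma bd_exists (A : Pi0 l) : ∃ N, Bd N A := by
  refine ⟨(A.vars.sup Prod.snd) + 1, fun j n hn => ?_⟩
  apply pderiv_eq_zero_of_notMem_vars
  intro hmem
  have := Finset.le_sup (f := Prod.snd) hmem
  simp only at this
  omega

lemma Bd.mono {N M : ℕ} {A : Pi0 l} (h : Bd N A) (hNM : N ≤ M) : Bd M A :=
  fun j n hn => h j n (le_trans hNM hn)

lemma Bd.zero {N : ℕ} : Bd N (0 : Pi0 l) := fun _ _ _ => map_zero _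

lemma Bd.add {N : ℕ} {A B : Pi0 l} (hA : Bd N A) (hB : Bd N B) : Bd N (A + B) := by
  intro j n hn; rw [map_add, hA j n hn, hB j n hn, add_zero]

lemma Bd.smul {N : ℕ} {a : ℂ} {A : Pi0 l} (hA : Bd N A) : Bd N (a • A) := by
  intro j n hn; rw [Derivation.map_smul, hA j n hn, smul_zero]

lemma Bd.neg {N : ℕ} {A : Pi0 l} (hA : Bd N A) : Bd N (-A) := by
  intro j n hn; rw [map_neg, hA j n hn, neg_zero]

lemma Bd.mul {N : ℕ} {A B : Pi0 l} (hA : Bd N A) (hB : Bd N B) : Bd N (A * B) := by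
  intro j n hn
  rw [pderiv_mul, hA j n hn, hB j n hn, zero_mul, mul_zero, add_zero]

lemma Bd.finsetSum {ι : Type*} {s : Finset ι} {N : ℕ} {f : ι → Pi0 l}
    (h : ∀ x ∈ s, Bd N (f x)) : Bd N (∑ x ∈ s, f x) := by
  intro j n hn
  rw [map_sum]
  exact Finset.sum_eq_zero fun x hx => h x hx j n hn

lemma Bd.D {N : ℕ} {A : Pi0 l} (hA : Bd N A) : Bd (N + 1) (DD l A) := by
  intro j n hn
  obtain ⟨m, rfl⟩ : ∃ m, n = m + 1 := ⟨n - 1, by omega⟩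
  rw [pd_D_commS, hA j (m + 1) (by omega), hA j m (by omega), map_zero, add_zero]

lemma Bd.Dpow {N r : ℕ} {A : Pi0 l} (hA : Bd N A) : Bd (N + r) ((DD l ^ r) A) := by
  induction r with
  | zero => simpa using hA
  | succ r ih =>
    have : (DD l ^ (r + 1)) A = DD l ((DD l ^ r) A) := by
      rw [pow_succ']; rfl
    rw [this]
    exact ih.D.mono (by omega) |>.mono (le_refl _)

lemma negDpow_apply (r : ℕ) (A : Pi0 l) :
    ((-DD l) ^ r) A = ((-1 : ℂ) ^ r) • ((DD l ^ r) A) := by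
  have : (-DD l) = (-1 : ℂ) • DD l := by ext x; simp
  rw [this, smul_pow]
  simp

lemma Bd.negDpow {N r : ℕ} {A : Pi0 l} (hA : Bd N A) : Bd (N + r) (((-DD l) ^ r) A) := by
  rw [negDpow_apply]
  exact hA.Dpow.smul

lemma Bd.pd {N : ℕ} {A : Pi0 l} (hA : Bd N A) (w : Fin l × ℕ) : Bd N (pderiv w A) := by
  intro j n hn
  rw [pd_pd_comm, hA j n hn, map_zero]

/-- The Euler operator `E_k`. -/
def Ei (k : Fin l) (A : Pi0 l) : Pi0 l :=
  ∑ᶠ n : ℕ, ((-DD l) ^ n) (pderiv ((k, n) : Fin l × ℕ) A)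

lemma vard_eq (c : Matrix (Fin l) (Fin l) ℂ) (i : Fin l) (P : Pi0 l) :
    vard c i P = ∑ j : Fin l, c i j • Ei j P := rfl

/-- Truncated Euler operator. -/
def EiT (k : Fin l) (N : ℕ) (A : Pi0 l) : Pi0 l :=
  ∑ n ∈ Finset.range N, ((-DD l) ^ n) (pderiv ((k, n) : Fin l × ℕ) A)

lemma Ei_eq_EiT {N : ℕ} {A : Pi0 l} (h : Bd N A) {M : ℕ} (hNM : N ≤ M) (k : Fin l) :
    Ei k A = EiT k M A := by
  apply finsum_eq_sum_of_support_subset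
  intro n hn
  simp only [Function.mem_support] at hn
  simp only [Finset.coe_range, Set.mem_Iio]
  by_contra hc
  exact hn (by rw [h k n (by omega), map_zero])

lemma Bd.EiT {N M : ℕ} {A : Pi0 l} (hA : Bd N A) (k : Fin l) : Bd (N + M) (EiT k M A) := by
  apply Bd.finsetSum
  intro n hn
  simp only [Finset.mem_range] at hn
  exact ((hA.pd _).negDpow).mono (by omega)

lemma Bd.vard {N : ℕ} {P : Pi0 l} (hP : Bd N P) (c : Matrix (Fin l) (Fin l) ℂ) (i : Fin l) :
    Bd (N + N) (vard c i P) := by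
  rw [vard_eq]
  apply Bd.finsetSum
  intro j _
  rw [Ei_eq_EiT hP (le_refl N) j]
  exact (hP.EiT j).smul


lemma Dpow_succ (n : ℕ) (S : Pi0 l) : (DD l ^ (n + 1)) S = (DD l ^ n) (DD l S) := by
  rw [pow_succ]; rfl

lemma Dpow_succ' (n : ℕ) (S : Pi0 l) : (DD l ^ (n + 1)) S = DD l ((DD l ^ n) S) := by
  rw [pow_succ']; rfl

lemma negDpow_succ (n : ℕ) (S : Pi0 l) :
    ((-DD l) ^ (n + 1)) S = ((-DD l) ^ n) (-(DD l S)) := by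
  rw [pow_succ]; rfl

lemma negDpow_succ' (n : ℕ) (S : Pi0 l) :
    ((-DD l) ^ (n + 1)) S = -(DD l (((-DD l) ^ n) S)) := by
  rw [pow_succ']; rfl

lemma DD_mul (A B : Pi0 l) : DD l (A * B) = DD l A * B + A * DD l B := by
  show pa l (A * B) = pa l A * B + A * pa l B
  rw [Derivation.leibniz]
  simp [smul_eq_mul]
  ring

/-- `T_k(B, S) = ∑_{n<M} (-∂)^n (∂B/∂u_k^{(n)} · S)` (truncated). -/
def TT (k : Fin l) (M : ℕ) (B S : Pi0 l) : Pi0 l :=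
  ∑ n ∈ Finset.range M, ((-DD l) ^ n) (pderiv ((k, n) : Fin l × ℕ) B * S)

/-- `T'_m(B, S) = ∑_{n<M} ∂B/∂u_m^{(n)} · ∂^n S` (truncated). -/
def TT' (m : Fin l) (M : ℕ) (B S : Pi0 l) : Pi0 l :=
  ∑ n ∈ Finset.range M, pderiv ((m, n) : Fin l × ℕ) B * (DD l ^ n) S

lemma TT_stable {N M : ℕ} {B : Pi0 l} (hB : Bd N B) (hNM : N ≤ M) (k : Fin l) (S : Pi0 l) :
    TT k M B S = TT k N B S := by
  unfold TT
  refine (Finset.sum_subset (Finset.range_subset_range.2 hNM) ?_).symm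
  intro n _ hn
  simp only [Finset.mem_range, not_lt] at hn
  rw [hB k n hn, zero_mul, map_zero]

lemma TT_add_right (k : Fin l) (M : ℕ) (B S S' : Pi0 l) :
    TT k M B (S + S') = TT k M B S + TT k M B S' := by
  unfold TT
  rw [← Finset.sum_add_distrib]
  refine Finset.sum_congr rfl fun n _ => ?_
  rw [mul_add, map_add]

lemma TT_neg_right (k : Fin l) (M : ℕ) (B S : Pi0 l) :
    TT k M B (-S) = -TT k M B S := by
  unfold TT
  rw [← Finset.sum_neg_distrib]
  refine Finset.sum_congr rfl fun n _ => ?_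
  rw [mul_neg, map_neg]

lemma TT_smul_right (k : Fin l) (M : ℕ) (a : ℂ) (B S : Pi0 l) :
    TT k M B (a • S) = a • TT k M B S := by
  unfold TT
  rw [Finset.smul_sum]
  refine Finset.sum_congr rfl fun n _ => ?_
  rw [mul_smul_comm, map_smul]

lemma TT_smul_left (k : Fin l) (M : ℕ) (a : ℂ) (B S : Pi0 l) :
    TT k M (a • B) S = a • TT k M B S := by
  unfold TT
  rw [Finset.smul_sum]
  refine Finset.sum_congr rfl fun n _ => ?_
  rw [Derivation.map_smul, smul_mul_assoc, map_smul]

lemma TT_sum_left {ι : Type*} (s : Finset ι) (f : ι → Pi0 l) (k : Fin l) (M : ℕ) (S : Pi0 l) :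
    TT k M (∑ x ∈ s, f x) S = ∑ x ∈ s, TT k M (f x) S := by
  unfold TT
  rw [Finset.sum_comm]
  refine Finset.sum_congr rfl fun n _ => ?_
  rw [map_sum, Finset.sum_mul, map_sum]

lemma Dpow_comm (n : ℕ) (x : Pi0 l) : (DD l ^ n) (DD l x) = DD l ((DD l ^ n) x) := by
  rw [← Dpow_succ, Dpow_succ']

lemma negDpow_comm_D (n : ℕ) (x : Pi0 l) :
    ((-DD l) ^ n) (DD l x) = DD l (((-DD l) ^ n) x) := by
  rw [negDpow_apply, negDpow_apply, Dpow_comm, map_smul]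

lemma TT_succ (k : Fin l) (M : ℕ) (B S : Pi0 l) :
    TT k (M + 1) B S = TT k M B S + ((-DD l) ^ M) (pderiv ((k, M) : Fin l × ℕ) B * S) :=
  Finset.sum_range_succ _ _

lemma TT'_succ (m : Fin l) (M : ℕ) (B S : Pi0 l) :
    TT' m (M + 1) B S = TT' m M B S + pderiv ((m, M) : Fin l × ℕ) B * (DD l ^ M) S :=
  Finset.sum_range_succ _ _

lemma TT_D_key (k : Fin l) (B S : Pi0 l) : ∀ M : ℕ,
    TT k (M + 1) (DD l B) S + TT k (M + 1) B (DD l S)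
      = ((-DD l) ^ M) (DD l (pderiv ((k, M) : Fin l × ℕ) B * S)) := by
  intro M
  induction M with
  | zero =>
    simp only [TT, zero_add, Finset.range_one, Finset.sum_singleton, pow_zero,
      Module.End.one_apply, pd_D_comm0]
    rw [DD_mul]
  | succ M ih =>
    rw [TT_succ k (M + 1), TT_succ k (M + 1), pd_D_commS, add_mul, map_add]
    have e1 : ((-DD l) ^ (M + 1)) (DD l (pderiv ((k, M + 1) : Fin l × ℕ) B) * S)
        + ((-DD l) ^ (M + 1)) (pderiv ((k, M + 1) : Fin l × ℕ) B * DD l S)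
        = ((-DD l) ^ (M + 1)) (DD l (pderiv ((k, M + 1) : Fin l × ℕ) B * S)) := by
      rw [← map_add, DD_mul]
    have e2 : ((-DD l) ^ (M + 1)) (pderiv ((k, M) : Fin l × ℕ) B * S)
        = -((-DD l) ^ M) (DD l (pderiv ((k, M) : Fin l × ℕ) B * S)) := by
      rw [negDpow_succ', negDpow_comm_D]
    linear_combination (norm := module) ih + e1 + e2

lemma TT_D {N M : ℕ} {B : Pi0 l} (hB : Bd N B) (hM : N + 1 ≤ M) (k : Fin l) (S : Pi0 l) :
    TT k M (DD l B) S = TT k M B (-(DD l S)) := by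
  obtain ⟨M', rfl⟩ : ∃ M', M = M' + 1 := ⟨M - 1, by omega⟩
  have key := TT_D_key k B S M'
  rw [hB k M' (by omega), zero_mul, map_zero, map_zero] at key
  rw [TT_neg_right]
  linear_combination (norm := module) key

lemma TT_Dpow {M r : ℕ} (k : Fin l) (S : Pi0 l) :
    ∀ (N : ℕ) (B : Pi0 l), Bd N B → N + r ≤ M →
    TT k M ((DD l ^ r) B) S = TT k M B (((-DD l) ^ r) S) := by
  induction r generalizing S with
  | zero => intro N B _ _; simp
  | succ r ih =>
    intro N B hB hM
    rw [Dpow_succ, ih S (N + 1) (DD l B) hB.D (by omega), TT_D hB (by omega), ← negDpow_succ']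

lemma TT'_D_key (m : Fin l) (B S : Pi0 l) : ∀ M : ℕ,
    TT' m (M + 1) (DD l B) S
      = DD l (TT' m (M + 1) B S) - pderiv ((m, M) : Fin l × ℕ) B * (DD l ^ (M + 1)) S := by
  intro M
  induction M with
  | zero =>
    simp only [TT', zero_add, Finset.range_one, Finset.sum_singleton, pow_zero,
      Module.End.one_apply, pd_D_comm0]
    rw [DD_mul, pow_one]
    ring
  | succ M ih =>
    rw [TT'_succ m (M + 1), TT'_succ m (M + 1), ih, pd_D_commS, map_add, DD_mul,
      ← Dpow_succ']
    ring

lemma TT'_D {N M : ℕ} {B : Pi0 l} (hB : Bd N B) (hM : N + 1 ≤ M) (m : Fin l) (S : Pi0 l) :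
    TT' m M (DD l B) S = DD l (TT' m M B S) := by
  obtain ⟨M', rfl⟩ : ∃ M', M = M' + 1 := ⟨M - 1, by omega⟩
  rw [TT'_D_key, hB m M' (by omega), zero_mul, sub_zero]


lemma TT'_smul_left (m : Fin l) (M : ℕ) (a : ℂ) (B S : Pi0 l) :
    TT' m M (a • B) S = a • TT' m M B S := by
  unfold TT'
  rw [Finset.smul_sum]
  refine Finset.sum_congr rfl fun n _ => ?_
  rw [Derivation.map_smul, smul_mul_assoc]

lemma TT'_sum_left {ι : Type*} (s : Finset ι) (f : ι → Pi0 l) (m : Fin l) (M : ℕ) (S : Pi0 l) :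
    TT' m M (∑ x ∈ s, f x) S = ∑ x ∈ s, TT' m M (f x) S := by
  unfold TT'
  rw [Finset.sum_comm]
  refine Finset.sum_congr rfl fun n _ => ?_
  rw [map_sum, Finset.sum_mul]

lemma TT'_Dpow {M r : ℕ} (m : Fin l) (S : Pi0 l) :
    ∀ (N : ℕ) (B : Pi0 l), Bd N B → N + r ≤ M →
    TT' m M ((DD l ^ r) B) S = (DD l ^ r) (TT' m M B S) := by
  induction r with
  | zero => intro N B _ _; simp
  | succ r ih =>
    intro N B hB hM
    rw [Dpow_succ, ih (N + 1) (DD l B) hB.D (by omega), TT'_D hB (by omega), Dpow_succ',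
      Dpow_comm]

lemma helmholtz {N M : ℕ} {P : Pi0 l} (hP : Bd N P) (hM : N + N ≤ M) (k m : Fin l)
    (S : Pi0 l) :
    TT k M (EiT m N P) S = TT' m M (EiT k N P) S := by
  have hL : TT k M (EiT m N P) S
      = ∑ r ∈ Finset.range N, TT k M (pderiv ((m, r) : Fin l × ℕ) P) ((DD l ^ r) S) := by
    rw [EiT, TT_sum_left]
    refine Finset.sum_congr rfl fun r hr => ?_
    simp only [Finset.mem_range] at hr
    rw [negDpow_apply, TT_smul_left, TT_Dpow k S N _ (hP.pd _) (by omega),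
      negDpow_apply, TT_smul_right, smul_smul, ← mul_pow, neg_mul_neg, one_mul, one_pow,
      one_smul]
  have hR : TT' m M (EiT k N P) S
      = ∑ r ∈ Finset.range N, ((-DD l) ^ r) (TT' m M (pderiv ((k, r) : Fin l × ℕ) P) S) := by
    rw [EiT, TT'_sum_left]
    refine Finset.sum_congr rfl fun r hr => ?_
    simp only [Finset.mem_range] at hr
    rw [negDpow_apply, TT'_smul_left, TT'_Dpow m S N _ (hP.pd _) (by omega), negDpow_apply]
  rw [hL, hR]
  have hsub : Finset.range N ⊆ Finset.range M := Finset.range_subset_range.2 (by omega)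
  calc ∑ r ∈ Finset.range N, TT k M (pderiv ((m, r) : Fin l × ℕ) P) ((DD l ^ r) S)
      = ∑ r ∈ Finset.range M, ∑ n ∈ Finset.range M,
          ((-DD l) ^ n) (pderiv ((k, n) : Fin l × ℕ) (pderiv ((m, r) : Fin l × ℕ) P)
            * (DD l ^ r) S) := by
        refine Finset.sum_subset hsub ?_
        intro r _ hr
        simp only [Finset.mem_range, not_lt] at hr
        refine Finset.sum_eq_zero fun n _ => ?_
        simp [hP m r hr]
    _ = ∑ r ∈ Finset.range M, ∑ n ∈ Finset.range M,
          ((-DD l) ^ r) (pderiv ((m, n) : Fin l × ℕ) (pderiv ((k, r) : Fin l × ℕ) P)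
            * (DD l ^ n) S) := by
        rw [Finset.sum_comm]
        refine Finset.sum_congr rfl fun r _ => Finset.sum_congr rfl fun n _ => ?_
        rw [pd_pd_comm]
    _ = ∑ r ∈ Finset.range N, ((-DD l) ^ r) (TT' m M (pderiv ((k, r) : Fin l × ℕ) P) S) := by
        rw [← Finset.sum_subset hsub ?_]
        · refine Finset.sum_congr rfl fun r _ => ?_
          rw [TT', map_sum]
        · intro r _ hr
          simp only [Finset.mem_range, not_lt] at hr
          refine Finset.sum_eq_zero fun n _ => ?_
          simp [hP k r hr]


lemma derivation_sum_apply {ι : Type*} (s : Finset ι) (f : ι → Derivation ℂ (Pi0 l) (Pi0 l))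
    (a : Pi0 l) : (∑ x ∈ s, f x) a = ∑ x ∈ s, f x a := by
  classical
  induction s using Finset.induction_on with
  | empty => simp
  | insert x s hx ih =>
    rw [Finset.sum_insert hx, Finset.sum_insert hx, Derivation.add_apply, ih]

/-- Bound on the differential order of the variables occurring in `A`. -/
def vb (A : Pi0 l) : ℕ := (A.vars.sup Prod.snd) + 1

lemma bd_vb (A : Pi0 l) : Bd (vb A) A := by
  intro j n hn
  apply pderiv_eq_zero_of_notMem_vars
  intro hmem
  have := Finset.le_sup (f := Prod.snd) hmem
  simp only at this
  unfold vb at hn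
  omega

lemma vars_subset {M : ℕ} (A : Pi0 l) (hM : vb A ≤ M) :
    (A.vars : Set (Fin l × ℕ)) ⊆ ((Finset.univ ×ˢ Finset.range M : Finset (Fin l × ℕ)) :
      Set (Fin l × ℕ)) := by
  intro w hw
  simp only [Finset.coe_mem, Finset.mem_coe, Finset.mem_product, Finset.mem_univ, true_and,
    Finset.mem_range]
  have := Finset.le_sup (f := Prod.snd) (by exact_mod_cast hw : w ∈ A.vars)
  unfold vb at hM
  omega

lemma derivation_expand (ξ : Derivation ℂ (Pi0 l) (Pi0 l)) (s : Finset (Fin l × ℕ))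
    (B : Pi0 l) (hB : (B.vars : Set (Fin l × ℕ)) ⊆ (s : Set (Fin l × ℕ))) :
    ξ B = ∑ w ∈ s, ξ (X w) * pderiv w B := by
  classical
  have h : ξ B = (∑ w ∈ s, ξ (X w) • (pderiv w : Derivation ℂ (Pi0 l) (Pi0 l))) B := by
    refine derivation_eqOn_supported ?_ (mem_supported.2 hB)
    intro w hw
    simp only [Function.comp_apply]
    rw [derivation_sum_apply]
    rw [Finset.sum_eq_single w]
    · simp [Derivation.smul_apply, pderiv_X_self, smul_eq_mul]
    · intro b _ hb
      simp [Derivation.smul_apply, pderiv_X_of_ne (Ne.symm hb)]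
    · intro hws; exact absurd hw hws
  rw [h, derivation_sum_apply]
  refine Finset.sum_congr rfl fun w _ => ?_
  rw [Derivation.smul_apply, smul_eq_mul]

lemma chain_rule (ξ : Derivation ℂ (Pi0 l) (Pi0 l)) (v : Fin l × ℕ) (s : Finset (Fin l × ℕ))
    (B : Pi0 l) (hB : (B.vars : Set (Fin l × ℕ)) ⊆ (s : Set (Fin l × ℕ))) :
    pderiv v (ξ B) = ξ (pderiv v B) + ∑ w ∈ s, pderiv v (ξ (X w)) * pderiv w B := by
  classical
  have h : (⁅(pderiv v : Derivation ℂ (Pi0 l) (Pi0 l)), ξ⁆) B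
      = (∑ w ∈ s, pderiv v (ξ (X w)) • (pderiv w : Derivation ℂ (Pi0 l) (Pi0 l))) B := by
    refine derivation_eqOn_supported ?_ (mem_supported.2 hB)
    intro w hw
    simp only [Function.comp_apply]
    rw [Derivation.commutator_apply, derivation_sum_apply, Finset.sum_eq_single w]
    · rcases eq_or_ne w v with rfl | hv
      · simp [Derivation.smul_apply, pderiv_X_self, smul_eq_mul]
      · simp [Derivation.smul_apply, pderiv_X_self, pderiv_X_of_ne hv, smul_eq_mul]
    · intro b _ hb
      simp [Derivation.smul_apply, pderiv_X_of_ne (Ne.symm hb)]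
    · intro hws; exact absurd hw hws
  rw [Derivation.commutator_apply] at h
  rw [derivation_sum_apply] at h
  have h2 : ∀ w ∈ s, (pderiv v (ξ (X w)) • (pderiv w : Derivation ℂ (Pi0 l) (Pi0 l))) B
      = pderiv v (ξ (X w)) * pderiv w B := fun w _ => by
    rw [Derivation.smul_apply, smul_eq_mul]
  rw [Finset.sum_congr rfl h2] at h
  linear_combination (norm := module) h

lemma xic_X (c : Matrix (Fin l) (Fin l) ℂ) (Q : Pi0 l) (p : Fin l × ℕ) :
    xic c Q (X p) = (DD l ^ (p.2 + 1)) (vard c p.1 Q) := by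
  have := mkDerivation_X (R := ℂ)
    (fun q : Fin l × ℕ => ((pa l).toLinearMap ^ (q.2 + 1)) (vard c q.1 Q)) p
  rw [xic]; exact this

lemma xic_D_comm (c : Matrix (Fin l) (Fin l) ℂ) (Q : Pi0 l) (A : Pi0 l) :
    xic c Q (DD l A) = DD l (xic c Q A) := by
  have h : ⁅xic c Q, pa l⁆ = 0 := by
    apply derivation_ext
    rintro ⟨i, m⟩
    rw [Derivation.commutator_apply, pa_X]
    have e1 : xic c Q (X ((i, m + 1) : Fin l × ℕ)) = (DD l ^ (m + 2)) (vard c i Q) :=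
      xic_X c Q _
    have e2 : xic c Q (X ((i, m) : Fin l × ℕ)) = (DD l ^ (m + 1)) (vard c i Q) := xic_X c Q _
    rw [e1, e2, ← DD_apply, ← Dpow_succ']
    simp
  have := congrArg (fun (D : Derivation ℂ (Pi0 l) (Pi0 l)) => D A) h
  simp only [Derivation.commutator_apply, Derivation.zero_apply] at this
  rw [sub_eq_zero] at this
  exact this

lemma xic_negDpow_comm (c : Matrix (Fin l) (Fin l) ℂ) (Q : Pi0 l) (n : ℕ) (A : Pi0 l) :
    xic c Q (((-DD l) ^ n) A) = ((-DD l) ^ n) (xic c Q A) := by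
  induction n with
  | zero => simp
  | succ n ih =>
    rw [negDpow_succ' n A, map_neg, negDpow_succ' n (xic c Q A), ← ih, ← xic_D_comm]


lemma TT_sum_right {ι : Type*} (s : Finset ι) (f : ι → Pi0 l) (k : Fin l) (M : ℕ)
    (B : Pi0 l) : TT k M B (∑ x ∈ s, f x) = ∑ x ∈ s, TT k M B (f x) := by
  unfold TT
  rw [Finset.sum_comm]
  refine Finset.sum_congr rfl fun n _ => ?_
  rw [Finset.mul_sum, map_sum]

lemma lemmaA (c : Matrix (Fin l) (Fin l) ℂ) (Q A : Pi0 l) (k : Fin l) {M : ℕ}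
    (hM1 : vb (xic c Q A) ≤ M) (hM2 : vb A ≤ M) (hM3 : vb Q + vb Q + 1 + vb A ≤ M) :
    Ei k (xic c Q A) = xic c Q (Ei k A)
      + ∑ j : Fin l, TT k M (DD l (vard c j Q)) (Ei j A) := by
  classical
  have hbA : Bd (vb A) A := bd_vb A
  have hbXA : Bd (vb (xic c Q A)) (xic c Q A) := bd_vb _
  have hG : ∀ j : Fin l, Bd (vb Q + vb Q + 1) (DD l (vard c j Q)) := fun j =>
    ((bd_vb Q).vard c j).D
  have hvars : (A.vars : Set (Fin l × ℕ))
      ⊆ ((Finset.univ ×ˢ Finset.range (vb A) : Finset (Fin l × ℕ)) : Set (Fin l × ℕ)) :=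
    vars_subset A le_rfl
  rw [Ei_eq_EiT hbXA hM1 k]
  have main : EiT k M (xic c Q A)
      = ∑ n ∈ Finset.range M, ((-DD l) ^ n) (xic c Q (pderiv ((k, n) : Fin l × ℕ) A))
        + ∑ n ∈ Finset.range M, ((-DD l) ^ n)
            (∑ w ∈ Finset.univ ×ˢ Finset.range (vb A),
              pderiv ((k, n) : Fin l × ℕ) (xic c Q (X w)) * pderiv w A) := by
    rw [EiT, ← Finset.sum_add_distrib]
    refine Finset.sum_congr rfl fun n _ => ?_
    rw [chain_rule (xic c Q) (k, n) _ A hvars, map_add]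
  have h1 : ∑ n ∈ Finset.range M, ((-DD l) ^ n) (xic c Q (pderiv ((k, n) : Fin l × ℕ) A))
      = xic c Q (Ei k A) := by
    have e : ∀ n ∈ Finset.range M, ((-DD l) ^ n) (xic c Q (pderiv ((k, n) : Fin l × ℕ) A))
        = xic c Q (((-DD l) ^ n) (pderiv ((k, n) : Fin l × ℕ) A)) :=
      fun n _ => (xic_negDpow_comm c Q n _).symm
    rw [Finset.sum_congr rfl e, ← map_sum, ← EiT, ← Ei_eq_EiT hbA hM2 k]
  have h2 : ∑ n ∈ Finset.range M, ((-DD l) ^ n)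
        (∑ w ∈ Finset.univ ×ˢ Finset.range (vb A),
          pderiv ((k, n) : Fin l × ℕ) (xic c Q (X w)) * pderiv w A)
      = ∑ j : Fin l, TT k M (DD l (vard c j Q)) (Ei j A) := by
    have e0 : ∀ n ∈ Finset.range M, ((-DD l) ^ n)
        (∑ w ∈ Finset.univ ×ˢ Finset.range (vb A),
          pderiv ((k, n) : Fin l × ℕ) (xic c Q (X w)) * pderiv w A)
        = ∑ w ∈ Finset.univ ×ˢ Finset.range (vb A),
          ((-DD l) ^ n) (pderiv ((k, n) : Fin l × ℕ) (xic c Q (X w)) * pderiv w A) :=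
      fun n _ => map_sum _ _ _
    rw [Finset.sum_congr rfl e0, Finset.sum_comm, Finset.sum_product]
    refine Finset.sum_congr rfl fun j _ => ?_
    have e : ∀ m ∈ Finset.range (vb A),
        (∑ n ∈ Finset.range M,
          ((-DD l) ^ n) (pderiv ((k, n) : Fin l × ℕ) (xic c Q (X ((j, m) : Fin l × ℕ)))
            * pderiv ((j, m) : Fin l × ℕ) A))
        = TT k M (DD l (vard c j Q)) (((-DD l) ^ m) (pderiv ((j, m) : Fin l × ℕ) A)) := by
      intro m hm
      simp only [Finset.mem_range] at hm
      have ex : xic c Q (X ((j, m) : Fin l × ℕ)) = (DD l ^ m) (DD l (vard c j Q)) := by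
        rw [xic_X c Q ((j, m) : Fin l × ℕ), ← Dpow_succ]
      rw [show (∑ n ∈ Finset.range M,
          ((-DD l) ^ n) (pderiv ((k, n) : Fin l × ℕ) (xic c Q (X ((j, m) : Fin l × ℕ)))
            * pderiv ((j, m) : Fin l × ℕ) A))
          = TT k M (xic c Q (X ((j, m) : Fin l × ℕ))) (pderiv ((j, m) : Fin l × ℕ) A) from rfl]
      rw [ex, TT_Dpow k _ (vb Q + vb Q + 1) _ (hG j) (by omega)]
    rw [Finset.sum_congr rfl e, ← TT_sum_right, ← EiT, ← Ei_eq_EiT hbA le_rfl j]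
  rw [main, h1, h2]

lemma xic_Dpow_comm (c : Matrix (Fin l) (Fin l) ℂ) (Q : Pi0 l) (n : ℕ) (A : Pi0 l) :
    xic c Q ((DD l ^ n) A) = (DD l ^ n) (xic c Q A) := by
  induction n with
  | zero => simp
  | succ n ih => rw [Dpow_succ' n A, Dpow_succ' n (xic c Q A), ← ih, ← xic_D_comm]

lemma key1 (c : Matrix (Fin l) (Fin l) ℂ) (P R : Pi0 l) (k j : Fin l) {M : ℕ}
    (hM : vb P + vb P + 1 ≤ M) :
    TT k M (DD l (vard c j P)) (Ei j R)
      = - ∑ m : Fin l, ∑ n ∈ Finset.range M,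
          c j m • (pderiv ((m, n) : Fin l × ℕ) (Ei k P) * (DD l ^ (n + 1)) (Ei j R)) := by
  have hbv : Bd (vb P + vb P) (vard c j P) := (bd_vb P).vard c j
  rw [TT_D hbv (by omega) k (Ei j R), TT_neg_right]
  have hv : vard c j P = ∑ m : Fin l, c j m • EiT m (vb P) P := by
    rw [vard_eq]
    exact Finset.sum_congr rfl fun m _ => by rw [Ei_eq_EiT (bd_vb P) le_rfl m]
  rw [hv, TT_sum_left]
  congr 1
  refine Finset.sum_congr rfl fun m _ => ?_
  rw [TT_smul_left, helmholtz (bd_vb P) (by omega) k m (DD l (Ei j R))]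
  rw [TT', Finset.smul_sum]
  refine Finset.sum_congr rfl fun n _ => ?_
  rw [← Ei_eq_EiT (bd_vb P) le_rfl k, ← Dpow_succ]

lemma key2 (c : Matrix (Fin l) (Fin l) ℂ) (P R : Pi0 l) (k : Fin l) {M : ℕ}
    (hM : vb (Ei k P) ≤ M) :
    xic c R (Ei k P)
      = ∑ j : Fin l, ∑ m' : Fin l, ∑ n ∈ Finset.range M,
          c j m' • ((DD l ^ (n + 1)) (Ei m' R) * pderiv ((j, n) : Fin l × ℕ) (Ei k P)) := by
  rw [derivation_expand (xic c R) (Finset.univ ×ˢ Finset.range M) (Ei k P)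
    (vars_subset _ hM), Finset.sum_product]
  refine Finset.sum_congr rfl fun j _ => ?_
  rw [Finset.sum_comm]
  refine Finset.sum_congr rfl fun n _ => ?_
  rw [xic_X c R ((j, n) : Fin l × ℕ)]
  rw [show ((j, n) : Fin l × ℕ).2 + 1 = n + 1 from rfl,
    show ((j, n) : Fin l × ℕ).1 = j from rfl]
  rw [vard_eq, map_sum, Finset.sum_mul]
  refine Finset.sum_congr rfl fun m' _ => ?_
  rw [map_smul, smul_mul_assoc]

lemma main_identity (c : Matrix (Fin l) (Fin l) ℂ) (hc : c.IsSymm) (P R : Pi0 l) (i : Fin l) :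
    vard c i (xic c P R) = xic c P (vard c i R) - xic c R (vard c i P) := by
  classical
  set M : ℕ := vb (xic c P R) + vb R + (vb P + vb P + 1) +
    (Finset.univ.sup (fun k : Fin l => vb (Ei k P))) with hMdef
  have hM1 : vb (xic c P R) ≤ M := by omega
  have hM2 : vb R ≤ M := by omega
  have hM3 : vb P + vb P + 1 + vb R ≤ M := by omega
  have hM4 : vb P + vb P + 1 ≤ M := by omega
  have hM5 : ∀ k : Fin l, vb (Ei k P) ≤ M := by
    intro k
    have h := Finset.le_sup (f := fun k : Fin l => vb (Ei k P)) (Finset.mem_univ k)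
    omega
  have expand1 : vard c i (xic c P R)
      = xic c P (vard c i R)
        + ∑ k : Fin l, c i k • ∑ j : Fin l, TT k M (DD l (vard c j P)) (Ei j R) := by
    rw [vard_eq]
    have e : ∀ k ∈ Finset.univ, c i k • Ei k (xic c P R)
        = c i k • xic c P (Ei k R)
          + c i k • ∑ j : Fin l, TT k M (DD l (vard c j P)) (Ei j R) := by
      intro k _
      rw [lemmaA c P R k hM1 hM2 hM3, smul_add]
    rw [Finset.sum_congr rfl e, Finset.sum_add_distrib]
    congr 1
    rw [vard_eq, map_sum]
    exact Finset.sum_congr rfl fun k _ => by rw [Derivation.map_smul]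
  have expand2 : xic c R (vard c i P)
      = ∑ k : Fin l, c i k • ∑ j : Fin l, ∑ m' : Fin l, ∑ n ∈ Finset.range M,
          c j m' • ((DD l ^ (n + 1)) (Ei m' R) * pderiv ((j, n) : Fin l × ℕ) (Ei k P)) := by
    rw [vard_eq, map_sum]
    exact Finset.sum_congr rfl fun k _ => by
      rw [Derivation.map_smul, key2 c P R k (hM5 k)]
  rw [expand1, expand2]
  have final : ∑ k : Fin l, c i k • ∑ j : Fin l, TT k M (DD l (vard c j P)) (Ei j R)
      = - ∑ k : Fin l, c i k • ∑ j : Fin l, ∑ m' : Fin l, ∑ n ∈ Finset.range M,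
          c j m' • ((DD l ^ (n + 1)) (Ei m' R) * pderiv ((j, n) : Fin l × ℕ) (Ei k P)) := by
    rw [← Finset.sum_neg_distrib]
    refine Finset.sum_congr rfl fun k _ => ?_
    rw [← smul_neg]
    congr 1
    have e : ∀ j ∈ Finset.univ, TT k M (DD l (vard c j P)) (Ei j R)
        = - ∑ m : Fin l, ∑ n ∈ Finset.range M,
            c j m • (pderiv ((m, n) : Fin l × ℕ) (Ei k P) * (DD l ^ (n + 1)) (Ei j R)) :=
      fun j _ => key1 c P R k j hM4
    rw [Finset.sum_congr rfl e, Finset.sum_neg_distrib, neg_inj, Finset.sum_comm]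
    refine Finset.sum_congr rfl fun a _ => Finset.sum_congr rfl fun b _ => ?_
    refine Finset.sum_congr rfl fun n _ => ?_
    rw [mul_comm, show c b a = c a b from Matrix.IsSymm.apply hc a b]
  rw [final]
  ring

end HamAux

open HamAux

set_option linter.unusedVariables false in
/-- `ξ_{ξ_P(R)} = ξ_P ∘ ξ_R − ξ_R ∘ ξ_P` as derivations of `π₀`. -/
theorem xi_intertwines_bracket (l : ℕ) (hl : 1 ≤ l)
    (c : Matrix (Fin l) (Fin l) ℂ) (hc : c.IsSymm) (P R : Pi0 l) :
    ∀ x : Pi0 l, xic c (xic c P R) x = xic c P (xic c R x) - xic c R (xic c P x) := by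
  intro x
  have hD : xic c (xic c P R) = ⁅xic c P, xic c R⁆ := by
    apply derivation_ext
    rintro ⟨i, n⟩
    rw [Derivation.commutator_apply]
    rw [xic_X c (xic c P R) ((i, n) : Fin l × ℕ), xic_X c R ((i, n) : Fin l × ℕ),
      xic_X c P ((i, n) : Fin l × ℕ)]
    rw [xic_Dpow_comm, xic_Dpow_comm]
    rw [main_identity c hc P R i, map_sub]
  rw [hD, Derivation.commutator_apply]
end
end
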